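/- arXiv:2304.13373 — 9 statements merged into one kernel-verified Lean document; each statement's English description precedes it below -/
import Mathlib

section
/- Let U ⊆ ℂ be open and let h : ℂ → ℝ be real-differentiable at every point of U. Define a : ℂ → ℂ by a(z) = ∂_y h(z) − i·∂_x h(z) (the Aharonov–Casher gauge, equivalent to ∂_z h = −i·conj(a)/2). (i) If u⁺ : ℂ → ℂ is real-differentiable on U and satisfies ∂_x u⁺(z) + i·∂_y u⁺(z) = i·a(z)·u⁺(z) for all z ∈ U (i.e. 2∂_{z̄}u⁺ = i a u⁺), then the function z ↦ exp(−h(z))·u⁺(z) is holomorphic (complex-differentiable) on U. (ii) If u⁻ : ℂ → ℂ is real-differentiable on U and satisfies ∂_x u⁻(z) − i·∂_y u⁻(z) = i·conj(a(z))·u⁻(z) for all z ∈ U (i.e. 2∂_z u⁻ = i·conj(a)·u⁻), then z ↦ conj(exp(h(z))·u⁻(z)) is holomorphic on U. -/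
/-- Cauchy–Riemann: a real-differentiable map `ℂ → ℂ` whose real Fréchet
derivative satisfies `f'(i) = i f'(1)` is complex differentiable. -/
lemma cr_complex_differentiableAt {f : ℂ → ℂ} {z : ℂ}
    (hf : DifferentiableAt ℝ f z)
    (hcr : fderiv ℝ f z Complex.I = Complex.I * fderiv ℝ f z 1) :
    DifferentiableAt ℂ f z := by
  rw [differentiableAt_iff_restrictScalars ℝ hf]
  refine ⟨(fderiv ℝ f z 1) • (ContinuousLinearMap.id ℂ ℂ), ?_⟩
  have key : ∀ v : ℂ, fderiv ℝ f z v = v * fderiv ℝ f z 1 := by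
    intro v
    have hv : v = (v.re : ℝ) • (1 : ℂ) + (v.im : ℝ) • Complex.I := by
      apply Complex.ext <;> simp
    rw [hv, map_add, map_smul, map_smul, hcr]
    simp only [Complex.real_smul, smul_eq_mul]
    ring
  ext w
  simp [key w, mul_comm]

/-- Proposition 2.4 (zero modes of the magnetic Dirac operator): in the
Aharonov–Casher gauge `a = ∂_y h − i ∂_x h`, solutions of
`2∂_{z̄} u⁺ = i a u⁺` yield `e^{−h} u⁺` holomorphic on `U`, and solutions of
`2∂_z u⁻ = i conj(a) u⁻` yield `conj(e^{h} u⁻)` holomorphic on `U`. -/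
theorem aharonov_casher_zero_mode_form
    (U : Set ℂ) (hU : IsOpen U)
    (h : ℂ → ℝ) (hh : ∀ z ∈ U, DifferentiableAt ℝ h z)
    (a : ℂ → ℂ)
    (ha : ∀ z : ℂ, a z = ((fderiv ℝ h z Complex.I : ℝ) : ℂ)
        - Complex.I * ((fderiv ℝ h z 1 : ℝ) : ℂ))
    (up um : ℂ → ℂ)
    (hup : ∀ z ∈ U, DifferentiableAt ℝ up z)
    (hpdeP : ∀ z ∈ U,
      fderiv ℝ up z 1 + Complex.I * fderiv ℝ up z Complex.I
        = Complex.I * a z * up z)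
    (hum : ∀ z ∈ U, DifferentiableAt ℝ um z)
    (hpdeM : ∀ z ∈ U,
      fderiv ℝ um z 1 - Complex.I * fderiv ℝ um z Complex.I
        = Complex.I * (starRingEnd ℂ (a z)) * um z) :
    DifferentiableOn ℂ (fun z => ((Real.exp (-h z) : ℝ) : ℂ) * up z) U ∧
    DifferentiableOn ℂ (fun z => starRingEnd ℂ (((Real.exp (h z) : ℝ) : ℂ) * um z)) U := by
  constructor
  · -- part (i)
    intro z hz
    refine (cr_complex_differentiableAt ?_ ?_).differentiableWithinAt
    all_goals {
      have hH := (hh z hz).hasFDerivAt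
      have hE : HasFDerivAt (fun w => ((Real.exp (-h w) : ℝ) : ℂ))
          (Complex.ofRealCLM.comp ((Real.exp (-h z)) • (-(fderiv ℝ h z)))) z :=
        Complex.ofRealCLM.hasFDerivAt.comp z hH.neg.exp
      have hU := (hup z hz).hasFDerivAt
      have hF : HasFDerivAt (fun w => ((Real.exp (-h w) : ℝ) : ℂ) * up w) _ z := hE.mul hU
      first
      | exact hF.differentiableAt
      | { rw [hF.fderiv]
          have pde := hpdeP z hz
          rw [ha z] at pde
          simp only [ContinuousLinearMap.add_apply, ContinuousLinearMap.smul_apply,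
            ContinuousLinearMap.comp_apply, ContinuousLinearMap.neg_apply,
            Complex.ofRealCLM_apply, Complex.real_smul, smul_eq_mul]
          push_cast [← Complex.ofReal_exp]
          set e : ℝ := Real.exp (-h z)
          set H1 : ℝ := fderiv ℝ h z 1
          set HI : ℝ := fderiv ℝ h z Complex.I
          set u1 : ℂ := fderiv ℝ up z 1
          set uI : ℂ := fderiv ℝ up z Complex.I
          linear_combination (-(Complex.I) * (e : ℂ)) * pde
            + ((e : ℂ) * uI - (e : ℂ) * up z * (HI : ℂ)
                + (e : ℂ) * up z * Complex.I * (H1 : ℂ)) * Complex.I_sq }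
    }
  · -- part (ii)
    intro z hz
    refine (cr_complex_differentiableAt ?_ ?_).differentiableWithinAt
    all_goals {
      have hH := (hh z hz).hasFDerivAt
      have hE : HasFDerivAt (fun w => ((Real.exp (h w) : ℝ) : ℂ))
          (Complex.ofRealCLM.comp ((Real.exp (h z)) • (fderiv ℝ h z))) z :=
        Complex.ofRealCLM.hasFDerivAt.comp z hH.exp
      have hU := (hum z hz).hasFDerivAt
      have hF := hE.mul hU
      have hG : HasFDerivAt (fun w => starRingEnd ℂ (((Real.exp (h w) : ℝ) : ℂ) * um w))
          ((Complex.conjCLE : ℂ →L[ℝ] ℂ).comp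
            ((((Real.exp (h z) : ℝ) : ℂ)) • (fderiv ℝ um z) +
              um z • (Complex.ofRealCLM.comp ((Real.exp (h z)) • (fderiv ℝ h z))))) z :=
        (Complex.conjCLE : ℂ →L[ℝ] ℂ).hasFDerivAt.comp z hF
      first
      | exact hG.differentiableAt
      | { rw [hG.fderiv]
          have pde := congrArg (starRingEnd ℂ) (hpdeM z hz)
          rw [ha z] at pde
          simp only [map_sub, map_add, map_mul, map_neg, Complex.conj_I, Complex.conj_conj,
            Complex.conj_ofReal] at pde
          simp only [ContinuousLinearMap.comp_apply, ContinuousLinearMap.add_apply,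
            ContinuousLinearMap.smul_apply, Complex.ofRealCLM_apply,
            ContinuousLinearMap.coe_coe, ContinuousLinearEquiv.coe_coe,
            Complex.conjCLE_apply, map_add, map_mul,
            Complex.conj_ofReal, Complex.real_smul, smul_eq_mul]
          push_cast [← Complex.ofReal_exp]
          set e : ℝ := Real.exp (h z)
          set H1 : ℝ := fderiv ℝ h z 1
          set HI : ℝ := fderiv ℝ h z Complex.I
          set c1 : ℂ := starRingEnd ℂ (fderiv ℝ um z 1)
          set cI : ℂ := starRingEnd ℂ (fderiv ℝ um z Complex.I)
          set c : ℂ := starRingEnd ℂ (um z)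
          linear_combination (-(Complex.I) * (e : ℂ)) * pde
            + ((e : ℂ) * cI + (e : ℂ) * c * (HI : ℂ)
                - (e : ℂ) * c * Complex.I * (H1 : ℂ)) * Complex.I_sq }
    }
end

section
/- Let 0 < r < R < ∞ and let a : ℤ → ℂ. Suppose f : ℂ → ℂ is a function such that for every compact subannulus {r' ≤ |z| ≤ R'} with r < r' < R' < R, the series Σ_{n∈ℤ} a(n)·zⁿ converges uniformly on it with sum f(z). Then, as an identity in [0, ∞], ∫_{{z : r < |z| < R}} |f(z)|² dA(z) = 2π·( |a(−1)|²·log(R/r) + Σ_{n∈ℤ, n≠−1} |a(n)|²·(R^{2n+2} − r^{2n+2})/(2n+2) ). -/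
open MeasureTheory Filter Set

open scoped Real

theorem lintegral_comp_polarCoord_symm' (g : ℝ × ℝ → ENNReal) :
    (∫⁻ p in polarCoord.target, ENNReal.ofReal p.1 * g (polarCoord.symm p)) = ∫⁻ q, g q := by
  set B : ℝ × ℝ → ℝ × ℝ →L[ℝ] ℝ × ℝ := fun p =>
    LinearMap.toContinuousLinearMap (Matrix.toLin (Module.Basis.finTwoProd ℝ) (Module.Basis.finTwoProd ℝ)
      !![Real.cos p.2, -p.1 * Real.sin p.2; Real.sin p.2, p.1 * Real.cos p.2]) with hB
  have B_det : ∀ p, (B p).det = p.1 := by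
    intro p
    conv_rhs => rw [← one_mul p.1, ← Real.cos_sq_add_sin_sq p.2]
    simp only [hB, neg_mul, LinearMap.det_toContinuousLinearMap, LinearMap.det_toLin,
      Matrix.det_fin_two_of, sub_neg_eq_add]
    ring
  symm
  calc
    ∫⁻ q, g q = ∫⁻ q in polarCoord.source, g q := by
      rw [← setLIntegral_univ]
      exact (setLIntegral_congr polarCoord_source_ae_eq_univ.symm)
    _ = ∫⁻ p in polarCoord.target, ENNReal.ofReal |(B p).det| * g (polarCoord.symm p) := by
      rw [← polarCoord.symm_image_target_eq_source]
      rw [lintegral_image_eq_lintegral_abs_det_fderiv_mul volume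
        polarCoord.open_target.measurableSet
        (fun p _ => (hasFDerivAt_polarCoord_symm p).hasFDerivWithinAt)
        polarCoord.symm.injOn g]
      simp_rw [det_fderivPolarCoordSymm, B_det]
    _ = _ := by
      refine setLIntegral_congr_fun polarCoord.open_target.measurableSet
        (fun p hp => ?_)
      rw [B_det, abs_of_pos hp.1]

theorem complex_lintegral_polar (g : ℂ → ENNReal) :
    (∫⁻ p in polarCoord.target, ENNReal.ofReal p.1 * g (Complex.polarCoord.symm p)) = ∫⁻ z, g z := by
  rw [← (Complex.volume_preserving_equiv_real_prod.symm).lintegral_comp_emb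
    Complex.measurableEquivRealProd.symm.measurableEmbedding g,
    ← lintegral_comp_polarCoord_symm' (fun q => g (Complex.measurableEquivRealProd.symm q))]
  rfl

open MeasureTheory Filter Set

open scoped Real Topology

theorem integral_exp_int_theta (k : ℤ) :
    (∫ θ : ℝ in (-π)..π, Complex.exp (k * θ * Complex.I))
      = if k = 0 then (2 * π : ℂ) else 0 := by
  rcases eq_or_ne k 0 with hk | hk
  · simp only [hk, Int.cast_zero, zero_mul, Complex.exp_zero, if_pos]
    rw [intervalIntegral.integral_const]
    push_cast
    ring_nf
    simp [two_mul]
  · rw [if_neg hk]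
    have hc : (k : ℂ) * Complex.I ≠ 0 := by
      simp [Complex.I_ne_zero, Int.cast_ne_zero, hk]
    have h1 : ∀ θ : ℝ, (k : ℂ) * θ * Complex.I = (k * Complex.I) * θ := fun θ => by ring
    simp only [h1]
    rw [integral_exp_mul_complex hc]
    have : Complex.exp ((k : ℂ) * Complex.I * π) = Complex.exp ((k : ℂ) * Complex.I * (-π)) := by
      rw [show ((k:ℂ) * Complex.I * π) = (k:ℂ) * Complex.I * (-π) + k * (2 * π * Complex.I) by
        push_cast; ring, Complex.exp_add, Complex.exp_int_mul_two_pi_mul_I, mul_one]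
    rw [this]
    push_cast
    rw [sub_self, zero_div]

theorem circle_key
    (r R : ℝ) (hr : 0 < r) (hrR : r < R)
    (a : ℤ → ℂ) (f : ℂ → ℂ)
    (hconv : ∀ r' R' : ℝ, r < r' → r' < R' → R' < R →
      TendstoUniformlyOn (fun (s : Finset ℤ) (z : ℂ) => ∑ n ∈ s, a n * z ^ n) f
        Filter.atTop {z : ℂ | r' ≤ ‖z‖ ∧ ‖z‖ ≤ R'})
    (ρ : ℝ) (hρ : ρ ∈ Set.Ioo r R) :
    Continuous (fun θ : ℝ => f (ρ * Complex.exp (θ * Complex.I))) ∧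
    HasSum (fun n : ℤ => 2 * π * (‖a n‖ ^ 2 * ρ ^ (2 * n)))
      (∫ θ in (-π)..π, ‖f (ρ * Complex.exp (θ * Complex.I))‖ ^ 2) := by
  have hρ0 : 0 < ρ := hr.trans hρ.1
  have hρc : (ρ : ℂ) ≠ 0 := Complex.ofReal_ne_zero.2 hρ0.ne'
  set e : ℝ → ℂ := fun θ => (ρ : ℂ) * Complex.exp (θ * Complex.I) with he
  have habs : ∀ θ : ℝ, ‖e θ‖ = ρ := by
    intro θ
    simp [he, Complex.norm_exp_ofReal_mul_I, abs_of_pos hρ0]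
  have key : ∀ (n : ℤ) (θ : ℝ),
      (e θ) ^ n = (ρ : ℂ) ^ n * Complex.exp (n * θ * Complex.I) := by
    intro n θ
    rw [he]
    simp only
    rw [mul_zpow, ← Complex.exp_int_mul]
    congr 2
    ring
  -- uniform convergence on the circle
  have hU : TendstoUniformlyOn (fun (s : Finset ℤ) (θ : ℝ) => ∑ n ∈ s, a n * (e θ) ^ n)
      (fun θ => f (e θ)) atTop Set.univ := by
    have h1 : r < (r + ρ) / 2 := by linarith [hρ.1]
    have h2 : (r + ρ) / 2 < (ρ + R) / 2 := by linarith [hρ.1, hρ.2]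
    have h3 : (ρ + R) / 2 < R := by linarith [hρ.2]
    have := (hconv _ _ h1 h2 h3).comp e
    apply this.mono
    intro θ _
    simp only [Set.mem_preimage, Set.mem_setOf_eq, habs θ]
    constructor <;> linarith [hρ.1, hρ.2]
  have hScont : ∀ s : Finset ℤ, Continuous fun θ : ℝ => ∑ n ∈ s, a n * (e θ) ^ n := by
    intro s
    apply continuous_finset_sum
    intro n _
    simp only [key n]
    fun_prop
  have hfc : Continuous fun θ : ℝ => f (e θ) := by
    rw [← continuousOn_univ]
    exact hU.continuousOn (Eventually.of_forall fun s => (hScont s).continuousOn).frequently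
  refine ⟨hfc, ?_⟩
  -- the integral of a partial sum
  have hterm : ∀ n : ℤ, ((2 * π * (‖a n‖ ^ 2 * ρ ^ (2 * n)) : ℝ) : ℂ)
      = ((2 * π : ℝ) : ℂ) * (a n * (starRingEnd ℂ) (a n) * (ρ : ℂ) ^ (n + n)) := by
    intro n
    have h2 : 2 * n = n + n := two_mul n
    rw [h2, Complex.mul_conj, ← Complex.ofReal_zpow, ← Complex.ofReal_mul, ← Complex.ofReal_mul]
    congr 1
    rw [← Complex.sq_norm]
  have hIs : ∀ s : Finset ℤ,
      (∫ θ in (-π)..π, ‖∑ n ∈ s, a n * (e θ) ^ n‖ ^ 2)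
        = ∑ n ∈ s, 2 * π * (‖a n‖ ^ 2 * ρ ^ (2 * n)) := by
    intro s
    have expand : ∀ θ : ℝ,
        ((‖∑ n ∈ s, a n * (e θ) ^ n‖ ^ 2 : ℝ) : ℂ)
          = ∑ n ∈ s, ∑ m ∈ s, (a n * (starRingEnd ℂ) (a m) * (ρ : ℂ) ^ (n + m))
              * Complex.exp (((n - m : ℤ) : ℂ) * θ * Complex.I) := by
      intro θ
      rw [Complex.sq_norm, ← Complex.mul_conj, map_sum, Finset.sum_mul_sum]
      refine Finset.sum_congr rfl fun n _ => Finset.sum_congr rfl fun m _ => ?_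
      rw [key n θ, key m θ]
      simp only [map_mul, ← Complex.exp_conj, Complex.conj_I, Complex.conj_ofReal,
        map_zpow₀, map_intCast]
      have hexp : Complex.exp ((n : ℂ) * θ * Complex.I) *
          Complex.exp ((m : ℂ) * θ * (-Complex.I))
            = Complex.exp (((n - m : ℤ) : ℂ) * θ * Complex.I) := by
        rw [← Complex.exp_add]
        congr 1
        push_cast
        ring
      rw [← hexp, zpow_add₀ hρc]
      ring
    apply Complex.ofReal_injective
    calc ((∫ θ in (-π)..π, ‖∑ n ∈ s, a n * (e θ) ^ n‖ ^ 2 : ℝ) : ℂ)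
        = ∫ θ in (-π)..π,
            ((‖∑ n ∈ s, a n * (e θ) ^ n‖ ^ 2 : ℝ) : ℂ) := by
          rw [intervalIntegral.integral_ofReal]
      _ = ∫ θ in (-π)..π, ∑ n ∈ s, ∑ m ∈ s,
            (a n * (starRingEnd ℂ) (a m) * (ρ : ℂ) ^ (n + m))
              * Complex.exp (((n - m : ℤ) : ℂ) * θ * Complex.I) := by
          simp only [expand]
      _ = ∑ n ∈ s, ∑ m ∈ s, (a n * (starRingEnd ℂ) (a m) * (ρ : ℂ) ^ (n + m))
              * (if (n - m : ℤ) = 0 then (2 * π : ℂ) else 0) := by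
          have hcont2 : ∀ (c : ℂ) (k : ℤ), Continuous fun θ : ℝ =>
              c * Complex.exp ((k : ℂ) * θ * Complex.I) := by
            intro c k
            fun_prop
          rw [intervalIntegral.integral_finset_sum (fun n _ =>
            Continuous.intervalIntegrable (continuous_finset_sum s fun m _ => hcont2 _ _) _ _)]
          refine Finset.sum_congr rfl fun n _ => ?_
          rw [intervalIntegral.integral_finset_sum (fun m _ =>
            Continuous.intervalIntegrable (hcont2 _ _) _ _)]
          refine Finset.sum_congr rfl fun m _ => ?_
          rw [intervalIntegral.integral_const_mul, integral_exp_int_theta]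
      _ = ∑ n ∈ s, ((2 * π : ℝ) : ℂ) * (a n * (starRingEnd ℂ) (a n) * (ρ : ℂ) ^ (n + n)) := by
          refine Finset.sum_congr rfl fun n hn => ?_
          simp only [sub_eq_zero, mul_ite, mul_zero, Finset.sum_ite_eq, if_pos hn]
          push_cast
          ring
      _ = ((∑ n ∈ s, 2 * π * (‖a n‖ ^ 2 * ρ ^ (2 * n)) : ℝ) : ℂ) := by
          rw [Complex.ofReal_sum]
          exact Finset.sum_congr rfl fun n _ => (hterm n).symm
  -- dominated convergence
  obtain ⟨M, hM⟩ : ∃ M, ∀ θ ∈ Set.Icc (-π) π, ‖f (e θ)‖ ≤ M :=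
    isCompact_Icc.exists_bound_of_continuousOn hfc.continuousOn
  have htend : Tendsto (fun s : Finset ℤ =>
      ∫ θ in (-π)..π, ‖∑ n ∈ s, a n * (e θ) ^ n‖ ^ 2) atTop
      (𝓝 (∫ θ in (-π)..π, ‖f (e θ)‖ ^ 2)) := by
    apply intervalIntegral.tendsto_integral_filter_of_dominated_convergence
      (fun _ => (M + 1) ^ 2)
    · exact Eventually.of_forall fun s =>
        ((continuous_norm.comp (hScont s)).pow 2).aestronglyMeasurable
    · have h1 := (Metric.tendstoUniformlyOn_iff.1 hU) 1 one_pos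
      filter_upwards [h1] with s hs
      refine Eventually.of_forall fun θ hθ => ?_
      have hθ' : θ ∈ Set.Icc (-π) π := by
        rw [Set.uIoc_of_le (by linarith [Real.pi_pos] : -π ≤ π)] at hθ
        exact ⟨hθ.1.le, hθ.2⟩
      have hb : ‖∑ n ∈ s, a n * (e θ) ^ n‖ ≤ M + 1 := by
        have hdist := hs θ (Set.mem_univ θ)
        have htri := norm_sub_norm_le (∑ n ∈ s, a n * (e θ) ^ n) (f (e θ))
        rw [← dist_eq_norm, dist_comm] at htri
        have hMθ := hM θ hθ'
        linarith
      rw [Real.norm_eq_abs, abs_of_nonneg (by positivity)]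
      exact pow_le_pow_left₀ (norm_nonneg _) hb 2
    · exact intervalIntegrable_const
    · refine Eventually.of_forall fun θ _ => ?_
      have := hU.tendsto_at (Set.mem_univ θ)
      exact ((continuous_norm.continuousAt.tendsto.comp this).pow 2)
  exact htend.congr fun s => hIs s

/-- Parseval-type computation (underlying Lemma 2.7): the `L²` norm of a Laurent
series `f(z) = Σ_{n∈ℤ} a(n) zⁿ` on the annulus `r < |z| < R`, as an identity in
`[0,∞]`, equals
`2π (|a(−1)|² log(R/r) + Σ_{n≠−1} |a(n)|² (R^{2n+2} − r^{2n+2})/(2n+2))`. -/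
theorem laurent_series_annulus_L2_norm
    (r R : ℝ) (hr : 0 < r) (hrR : r < R)
    (a : ℤ → ℂ) (f : ℂ → ℂ)
    (hconv : ∀ r' R' : ℝ, r < r' → r' < R' → R' < R →
      TendstoUniformlyOn (fun (s : Finset ℤ) (z : ℂ) => ∑ n ∈ s, a n * z ^ n) f
        Filter.atTop {z : ℂ | r' ≤ ‖z‖ ∧ ‖z‖ ≤ R'}) :
    (∫⁻ z in {z : ℂ | r < ‖z‖ ∧ ‖z‖ < R},
        ENNReal.ofReal (‖f z‖ ^ 2))
      = ENNReal.ofReal (2 * Real.pi) *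
        (ENNReal.ofReal (‖a (-1)‖ ^ 2 * Real.log (R / r)) +
          ∑' n : {m : ℤ // m ≠ -1},
            ENNReal.ofReal (‖a (n : ℤ)‖ ^ 2 *
              ((R ^ (2 * (n : ℤ) + 2) - r ^ (2 * (n : ℤ) + 2)) /
                (2 * ((n : ℤ) : ℝ) + 2)))) := by
  have hπ : (0:ℝ) < π := Real.pi_pos
  set g : ℂ → ENNReal := fun z => ENNReal.ofReal (‖f z‖ ^ 2) with hg
  set A : Set ℂ := {z : ℂ | r < ‖z‖ ∧ ‖z‖ < R} with hA
  have hAopen : IsOpen A := by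
    have : A = (‖·‖) ⁻¹' (Set.Ioo r R) := rfl
    rw [this]
    exact isOpen_Ioo.preimage continuous_norm
  -- continuity of f on A
  have hfA : ContinuousOn f A := by
    intro z hz
    obtain ⟨hz1, hz2⟩ := hz
    have h1 : r < (r + ‖z‖) / 2 := by linarith
    have h2 : (r + ‖z‖) / 2 < (‖z‖ + R) / 2 := by linarith
    have h3 : (‖z‖ + R) / 2 < R := by linarith
    have hcont' : ContinuousOn f
        {w : ℂ | (r + ‖z‖) / 2 ≤ ‖w‖ ∧
          ‖w‖ ≤ (‖z‖ + R) / 2} := by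
      refine (hconv _ _ h1 h2 h3).continuousOn (Eventually.of_forall fun s => ?_).frequently
      refine continuousOn_finset_sum s fun n _ => ?_
      refine continuousOn_const.mul ((continuousOn_zpow₀ n).mono fun w hw => ?_)
      simp only [Set.mem_compl_iff, Set.mem_singleton_iff]
      intro h0
      rw [Set.mem_setOf_eq, h0] at hw
      simp only [norm_zero] at hw
      linarith [hw.1]
    have hnbhd : {w : ℂ | (r + ‖z‖) / 2 ≤ ‖w‖ ∧
        ‖w‖ ≤ (‖z‖ + R) / 2} ∈ nhds z := by
      refine Filter.mem_of_superset
        ((isOpen_Ioo.preimage continuous_norm).mem_nhds ?_)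
        (fun w hw => ⟨hw.1.le, hw.2.le⟩)
      exact Set.mem_preimage.2 ⟨by linarith, by linarith⟩
    exact (hcont'.continuousAt hnbhd).continuousWithinAt
  -- polar change of variables
  have step1 : (∫⁻ z in A, g z)
      = ∫⁻ p in Set.Ioo r R ×ˢ Set.Ioo (-π) π,
          ENNReal.ofReal p.1 * g (Complex.polarCoord.symm p) := by
    rw [← lintegral_indicator hAopen.measurableSet,
      ← complex_lintegral_polar (A.indicator g),
      ← lintegral_indicator polarCoord.open_target.measurableSet,
      ← lintegral_indicator (measurableSet_Ioo.prod measurableSet_Ioo)]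
    congr 1
    funext p
    by_cases hp : p ∈ Set.Ioo r R ×ˢ Set.Ioo (-π) π
    · have hp1 : p.1 ∈ Set.Ioo r R := hp.1
      have hpt : p ∈ polarCoord.target := by
        rw [polarCoord_target]
        exact ⟨hr.trans hp1.1, hp.2⟩
      have habs : ‖Complex.polarCoord.symm p‖ = p.1 := by
        rw [Complex.norm_polarCoord_symm, abs_of_pos (hr.trans hp1.1)]
      have hmem : Complex.polarCoord.symm p ∈ A := by
        rw [hA, Set.mem_setOf_eq, habs]
        exact ⟨hp1.1, hp1.2⟩
      rw [Set.indicator_of_mem hpt, Set.indicator_of_mem hp, Set.indicator_of_mem hmem]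
    · rw [Set.indicator_of_notMem hp]
      by_cases hpt : p ∈ polarCoord.target
      · rw [Set.indicator_of_mem hpt]
        have hpt1 : 0 < p.1 := by
          rw [polarCoord_target] at hpt
          exact hpt.1
        have habs : ‖Complex.polarCoord.symm p‖ = p.1 := by
          rw [Complex.norm_polarCoord_symm, abs_of_pos hpt1]
        have hnm : Complex.polarCoord.symm p ∉ A := by
          intro hmem
          rw [hA, Set.mem_setOf_eq, habs] at hmem
          apply hp
          rw [polarCoord_target] at hpt
          exact ⟨hmem, hpt.2⟩
        rw [Set.indicator_of_notMem hnm, mul_zero]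
      · rw [Set.indicator_of_notMem hpt]
  -- continuity of the polar map
  have hsymm_cont : Continuous (fun p : ℝ × ℝ => Complex.polarCoord.symm p) := by
    have : (fun p : ℝ × ℝ => Complex.polarCoord.symm p)
        = fun p : ℝ × ℝ => (p.1 : ℂ) * (Real.cos p.2 + Real.sin p.2 * Complex.I) := by
      funext p
      exact Complex.polarCoord_symm_apply p
    rw [this]
    fun_prop
  have hmapsto : Set.MapsTo (fun p : ℝ × ℝ => Complex.polarCoord.symm p)
      (Set.Ioo r R ×ˢ Set.Ioo (-π) π) A := by
    intro p hp
    have hp1 : p.1 ∈ Set.Ioo r R := hp.1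
    have habs : ‖Complex.polarCoord.symm p‖ = p.1 := by
      rw [Complex.norm_polarCoord_symm, abs_of_pos (hr.trans hp1.1)]
    rw [hA, Set.mem_setOf_eq, habs]
    exact ⟨hp1.1, hp1.2⟩
  -- Tonelli
  have hmeas : AEMeasurable
      (fun p : ℝ × ℝ => ENNReal.ofReal p.1 * g (Complex.polarCoord.symm p))
      ((volume.restrict (Set.Ioo r R)).prod (volume.restrict (Set.Ioo (-π) π))) := by
    have hcont : ContinuousOn
        (fun p : ℝ × ℝ => ‖f (Complex.polarCoord.symm p)‖ ^ 2)
        (Set.Ioo r R ×ˢ Set.Ioo (-π) π) :=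
      ((continuous_norm.comp_continuousOn
        (hfA.comp hsymm_cont.continuousOn hmapsto)).pow 2)
    have h2 : AEMeasurable (fun p : ℝ × ℝ => g (Complex.polarCoord.symm p))
        (volume.restrict (Set.Ioo r R ×ˢ Set.Ioo (-π) π)) :=
      (ENNReal.continuous_ofReal.comp_continuousOn hcont).aemeasurable
        (measurableSet_Ioo.prod measurableSet_Ioo)
    have h1 : AEMeasurable (fun p : ℝ × ℝ => ENNReal.ofReal p.1)
        (volume.restrict (Set.Ioo r R ×ˢ Set.Ioo (-π) π)) :=
      (measurable_fst.ennreal_ofReal).aemeasurable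
    have := h1.mul h2
    rwa [Measure.volume_eq_prod, ← Measure.prod_restrict] at this
  have step2 : (∫⁻ p in Set.Ioo r R ×ˢ Set.Ioo (-π) π,
        ENNReal.ofReal p.1 * g (Complex.polarCoord.symm p))
      = ∫⁻ ρ in Set.Ioo r R, ∫⁻ θ in Set.Ioo (-π) π,
          ENNReal.ofReal ρ * g (Complex.polarCoord.symm (ρ, θ)) := by
    rw [Measure.volume_eq_prod, ← Measure.prod_restrict]
    exact lintegral_prod _ hmeas
  -- inner integral via the circle computation
  have hinner : ∀ ρ ∈ Set.Ioo r R,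
      (∫⁻ θ in Set.Ioo (-π) π, ENNReal.ofReal ρ * g (Complex.polarCoord.symm (ρ, θ)))
        = ∑' n : ℤ, ENNReal.ofReal (ρ * (2 * π * (‖a n‖ ^ 2 * ρ ^ (2 * n)))) := by
    intro ρ hρmem
    have hρ0 : 0 < ρ := hr.trans hρmem.1
    obtain ⟨hfc, hHS⟩ := circle_key r R hr hrR a f hconv ρ hρmem
    have hsymm_eq : ∀ θ : ℝ,
        Complex.polarCoord.symm (ρ, θ) = (ρ : ℂ) * Complex.exp (θ * Complex.I) := by
      intro θ
      rw [Complex.polarCoord_symm_apply, Complex.exp_mul_I]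
      simp [← Complex.ofReal_cos, ← Complex.ofReal_sin]
    simp only [hg, hsymm_eq]
    rw [lintegral_const_mul' _ _ ENNReal.ofReal_ne_top]
    have hInt : IntegrableOn
        (fun θ : ℝ => ‖f ((ρ : ℂ) * Complex.exp (θ * Complex.I))‖ ^ 2)
        (Set.Ioo (-π) π) := by
      apply (((continuous_norm.comp hfc).pow 2).continuousOn.integrableOn_Icc).mono_set
        Set.Ioo_subset_Icc_self
    rw [← ofReal_integral_eq_lintegral_ofReal hInt
      (Eventually.of_forall fun θ => sq_nonneg _)]
    have h1 : (∫ θ in Set.Ioo (-π) π,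
          ‖f ((ρ : ℂ) * Complex.exp (θ * Complex.I))‖ ^ 2)
        = ∫ θ in (-π)..π, ‖f ((ρ : ℂ) * Complex.exp (θ * Complex.I))‖ ^ 2 := by
      rw [intervalIntegral.integral_of_le (by linarith), integral_Ioc_eq_integral_Ioo]
    rw [h1, ← hHS.tsum_eq,
      ENNReal.ofReal_tsum_of_nonneg (fun n => by positivity) hHS.summable,
      ← ENNReal.tsum_mul_left]
    congr 1
    funext n
    rw [← ENNReal.ofReal_mul hρ0.le]
  -- swap sum and integral
  have hswap : (∫⁻ ρ in Set.Ioo r R,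
        ∑' n : ℤ, ENNReal.ofReal (ρ * (2 * π * (‖a n‖ ^ 2 * ρ ^ (2 * n)))))
      = ∑' n : ℤ, ∫⁻ ρ in Set.Ioo r R,
          ENNReal.ofReal (ρ * (2 * π * (‖a n‖ ^ 2 * ρ ^ (2 * n)))) := by
    refine lintegral_tsum fun n => ?_
    have hcont : ContinuousOn
        (fun ρ : ℝ => ρ * (2 * π * (‖a n‖ ^ 2 * ρ ^ (2 * n))))
        (Set.Ioo r R) := by
      refine (continuousOn_id.mul (continuousOn_const.mul (continuousOn_const.mul
        ((continuousOn_zpow₀ (2 * n)).mono fun ρ hρm => ?_))))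
      simp only [Set.mem_compl_iff, Set.mem_singleton_iff]
      exact (hr.trans hρm.1).ne'
    exact (ENNReal.continuous_ofReal.comp_continuousOn hcont).aemeasurable measurableSet_Ioo
  -- the radial integrals
  have h0uIcc : (0 : ℝ) ∉ Set.uIcc r R := by
    rw [Set.uIcc_of_le hrR.le]
    intro h
    linarith [h.1]
  have hIn_nonneg : ∀ n : ℤ, (0:ℝ) ≤ ∫ ρ in r..R, ρ ^ (2 * n + 1) :=
    fun n => intervalIntegral.integral_nonneg hrR.le
      (fun ρ hρm => zpow_nonneg (hr.le.trans hρm.1) _)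
  have hradial : ∀ n : ℤ, (∫ ρ in r..R, ρ ^ (2 * n + 1))
      = if n = -1 then Real.log (R / r)
        else (R ^ (2 * n + 2) - r ^ (2 * n + 2)) / (2 * (n : ℝ) + 2) := by
    intro n
    rcases eq_or_ne n (-1) with hn | hn
    · subst hn
      rw [if_pos rfl, show (2 * (-1 : ℤ) + 1) = -1 by norm_num]
      simp only [zpow_neg, zpow_one]
      exact integral_inv h0uIcc
    · rw [if_neg hn, integral_zpow (Or.inr ⟨by omega, h0uIcc⟩),
        show (2 * n + 1) + 1 = 2 * n + 2 by ring]
      push_cast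
      ring
  -- per-term radial lintegral
  have hpern : ∀ n : ℤ, (∫⁻ ρ in Set.Ioo r R,
        ENNReal.ofReal (ρ * (2 * π * (‖a n‖ ^ 2 * ρ ^ (2 * n)))))
      = ENNReal.ofReal (2 * π) *
          ENNReal.ofReal (‖a n‖ ^ 2 * ∫ ρ in r..R, ρ ^ (2 * n + 1)) := by
    intro n
    have hcont : ContinuousOn
        (fun ρ : ℝ => ρ * (2 * π * (‖a n‖ ^ 2 * ρ ^ (2 * n))))
        (Set.Icc r R) := by
      refine (continuousOn_id.mul (continuousOn_const.mul (continuousOn_const.mul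
        ((continuousOn_zpow₀ (2 * n)).mono fun ρ hρm => ?_))))
      simp only [Set.mem_compl_iff, Set.mem_singleton_iff]
      exact (hr.trans_le hρm.1).ne'
    have hIntOn : IntegrableOn
        (fun ρ : ℝ => ρ * (2 * π * (‖a n‖ ^ 2 * ρ ^ (2 * n))))
        (Set.Ioo r R) :=
      (hcont.integrableOn_Icc).mono_set Set.Ioo_subset_Icc_self
    rw [← ofReal_integral_eq_lintegral_ofReal hIntOn
      ((ae_restrict_iff' measurableSet_Ioo).2 (Eventually.of_forall fun ρ hρm => by
        have hρ0 : 0 < ρ := hr.trans hρm.1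
        positivity))]
    rw [← ENNReal.ofReal_mul (by positivity : (0:ℝ) ≤ 2 * π)]
    congr 1
    rw [← integral_Ioc_eq_integral_Ioo, ← intervalIntegral.integral_of_le hrR.le]
    have hEq : Set.EqOn (fun ρ : ℝ => ρ * (2 * π * (‖a n‖ ^ 2 * ρ ^ (2 * n))))
        (fun ρ : ℝ => (2 * π * (‖a n‖ ^ 2)) * ρ ^ (2 * n + 1))
        (Set.uIcc r R) := by
      intro ρ hρm
      rw [Set.uIcc_of_le hrR.le] at hρm
      have hρne : ρ ≠ 0 := (hr.trans_le hρm.1).ne'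
      simp only
      rw [zpow_add_one₀ hρne]
      ring
    rw [intervalIntegral.integral_congr hEq, intervalIntegral.integral_const_mul]
    ring
  -- assemble
  rw [step1, step2, setLIntegral_congr_fun measurableSet_Ioo
    (fun ρ hρm => hinner ρ hρm), hswap]
  have hterm : ∀ n : ℤ, (∫⁻ ρ in Set.Ioo r R,
        ENNReal.ofReal (ρ * (2 * π * (‖a n‖ ^ 2 * ρ ^ (2 * n)))))
      = ENNReal.ofReal (2 * π) *
          ENNReal.ofReal (‖a n‖ ^ 2 * ∫ ρ in r..R, ρ ^ (2 * n + 1)) := hpern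
  simp only [hterm]
  rw [ENNReal.tsum_mul_left]
  congr 1
  -- split off n = -1
  have hsplit := Summable.tsum_add_tsum_compl (s := ({-1} : Set ℤ))
    (f := fun n : ℤ => ENNReal.ofReal (‖a n‖ ^ 2 * ∫ ρ in r..R, ρ ^ (2 * n + 1)))
    ENNReal.summable ENNReal.summable
  rw [← hsplit]
  beta_reduce
  rw [tsum_singleton (-1) (fun n : ℤ =>
    ENNReal.ofReal (‖a n‖ ^ 2 * ∫ ρ in r..R, ρ ^ (2 * n + 1)))]
  congr 1
  · rw [hradial (-1), if_pos rfl]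
  · rw [← Equiv.tsum_eq (Equiv.subtypeEquivRight
      (fun m : ℤ => (Set.mem_compl_singleton_iff (a := m) (b := (-1 : ℤ))).symm))
      (fun x : ↥(({-1} : Set ℤ)ᶜ) =>
        ENNReal.ofReal (‖a (x : ℤ)‖ ^ 2 * ∫ ρ in r..R, ρ ^ (2 * (x : ℤ) + 1)))]
    refine tsum_congr fun n => ?_
    rw [Equiv.subtypeEquivRight_apply]
    simp only
    rw [hradial (n : ℤ), if_neg n.2]
end

section
/- Let Φ ∈ ℝ, R₀ ≥ 1, C ≥ 0, and let h : ℂ → ℝ be a measurable function satisfying |h(z) + (Φ/2π)·log|z|| ≤ C/|z| for all z with |z| ≥ R₀. Then for every natural number n: ∫_{{z : |z| > R₀}} exp(2h(z))·|z|^{2n} dA(z) < ∞ if and only if n < Φ/(2π) − 1. -/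
open MeasureTheory

open Set
open scoped ENNReal

lemma lintegral_fun_norm_c (f : ℝ → ℝ≥0∞) (hf : Measurable f) :
    ∫⁻ z : ℂ, f ‖z‖ = (volume : Measure ℂ).toSphere univ
      * ∫⁻ r in Ioi (0:ℝ), ENNReal.ofReal r * f r := by
  have h1 : ∫⁻ x : ({(0:ℂ)}ᶜ : Set ℂ), f ‖x.1‖ ∂(volume.comap Subtype.val)
      = ∫⁻ z : ℂ, f ‖z‖ := by
    rw [lintegral_subtype_comap (measurableSet_singleton (0:ℂ)).compl (fun z : ℂ => f ‖z‖),
      restrict_compl_singleton]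
  have h4 : ∫⁻ x : Ioi (0:ℝ), f x ∂(Measure.volumeIoiPow (2 - 1))
      = ∫⁻ r in Ioi (0:ℝ), ENNReal.ofReal r * f r := by
    rw [Measure.volumeIoiPow]
    rw [lintegral_withDensity_eq_lintegral_mul _
      ((measurable_subtype_coe.pow_const _).ennreal_ofReal)
      (show Measurable (fun x : Ioi (0:ℝ) => f ↑x) from hf.comp measurable_subtype_coe)]
    simp only [Pi.mul_apply, show (2-1:ℕ)=1 from rfl, pow_one]
    exact lintegral_subtype_comap measurableSet_Ioi (fun r => ENNReal.ofReal r * f r)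
  rw [← h1]
  have h2 := (volume : Measure ℂ).measurePreserving_homeomorphUnitSphereProd
  have h3 := h2.lintegral_comp (f := fun p : Metric.sphere (0:ℂ) 1 × Ioi (0:ℝ) => f p.2)
    (hf.comp (measurable_subtype_coe.comp measurable_snd))
  simp only [Complex.finrank_real_complex] at h3
  rw [show (fun x : ({(0:ℂ)}ᶜ : Set ℂ) => f ‖x.1‖)
      = fun x => (fun p : Metric.sphere (0:ℂ) 1 × Ioi (0:ℝ) => f p.2)
        (homeomorphUnitSphereProd ℂ x) from by funext x; simp, h3]
  rw [lintegral_prod (fun p : Metric.sphere (0:ℂ) 1 × Ioi (0:ℝ) => f p.2)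
    ((hf.comp (measurable_subtype_coe.comp measurable_snd)).aemeasurable)]
  simp only [Prod.snd]
  rw [h4, lintegral_const, mul_comm]

lemma lintegral_Ioi_rpow_lt_top_iff {R q : ℝ} (hR : 0 < R) :
    (∫⁻ r in Ioi R, ENNReal.ofReal (r ^ q)) < ⊤ ↔ q < -1 := by
  have hm : AEStronglyMeasurable (fun r : ℝ => r ^ q) (volume.restrict (Ioi R)) :=
    (show Measurable fun r : ℝ => r ^ q by fun_prop).aestronglyMeasurable
  have hnn : 0 ≤ᵐ[volume.restrict (Ioi R)] fun r : ℝ => r ^ q := by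
    filter_upwards [ae_restrict_mem measurableSet_Ioi] with r hr
    exact Real.rpow_nonneg (le_of_lt (hR.trans hr)) q
  rw [← integrableOn_Ioi_rpow_iff hR, IntegrableOn, Integrable, and_iff_right hm,
    hasFiniteIntegral_iff_ofReal hnn]

lemma key_rpow (R q : ℝ) (hR : 0 < R) :
    (∫⁻ z in {z : ℂ | R < ‖z‖}, ENNReal.ofReal (‖z‖ ^ q)) < ⊤
      ↔ q < -2 := by
  set F : ℝ → ℝ≥0∞ := (Ioi R).indicator (fun r => ENNReal.ofReal (r ^ q)) with hF
  have hFm : Measurable F :=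
    ((show Measurable fun r : ℝ => r ^ q by fun_prop).ennreal_ofReal).indicator measurableSet_Ioi
  have hset : {z : ℂ | R < ‖z‖} = (fun z : ℂ => ‖z‖) ⁻¹' (Ioi R) := by
    ext z; simp
  have h0 : (∫⁻ z in {z : ℂ | R < ‖z‖}, ENNReal.ofReal (‖z‖ ^ q))
      = ∫⁻ z : ℂ, F ‖z‖ := by
    rw [hset, ← lintegral_indicator (measurableSet_Ioi.preimage measurable_norm)
      (fun z : ℂ => ENNReal.ofReal (‖z‖ ^ q))]
    refine lintegral_congr fun z => ?_
    have hco := Set.indicator_comp_right (s := Ioi R) (fun z : ℂ => ‖z‖)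
      (g := fun r => ENNReal.ofReal (r ^ q)) (x := z)
    exact hco
  rw [h0, lintegral_fun_norm_c F hFm]
  have h2 : ∫⁻ r in Ioi (0:ℝ), ENNReal.ofReal r * F r
      = ∫⁻ r in Ioi R, ENNReal.ofReal (r ^ (q + 1)) := by
    have e1 : (fun r => ENNReal.ofReal r * F r)
        = (Ioi R).indicator (fun r => ENNReal.ofReal r * ENNReal.ofReal (r ^ q)) := by
      funext r
      by_cases hr : r ∈ Ioi R <;> simp [hF, indicator, hr]
    rw [e1, lintegral_indicator measurableSet_Ioi _, Measure.restrict_restrict measurableSet_Ioi,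
      inter_eq_left.2 (Ioi_subset_Ioi hR.le)]
    refine setLIntegral_congr_fun measurableSet_Ioi (fun r hr => ?_)
    have hr0 : (0:ℝ) < r := hR.trans hr
    rw [← ENNReal.ofReal_mul hr0.le]
    congr 1
    rw [Real.rpow_add hr0, Real.rpow_one, mul_comm]
  rw [h2]
  have hc0 : (volume : Measure ℂ).toSphere univ ≠ 0 := by
    rw [Measure.toSphere_apply_univ]
    simp only [ne_eq, mul_eq_zero, not_or]
    exact ⟨by simp [Complex.finrank_real_complex],
      (Metric.measure_ball_pos volume (0:ℂ) one_pos).ne'⟩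
  have hcT : (volume : Measure ℂ).toSphere univ ≠ ⊤ := measure_ne_top _ _
  rw [ENNReal.mul_lt_top_iff]
  constructor
  · rintro (⟨-, hI⟩ | hc | hI)
    · have := (lintegral_Ioi_rpow_lt_top_iff hR).1 hI; linarith
    · exact absurd hc hc0
    · have := (lintegral_Ioi_rpow_lt_top_iff hR).1 (by rw [hI]; simp)
      linarith
  · intro hq
    exact Or.inl ⟨hcT.lt_top, (lintegral_Ioi_rpow_lt_top_iff hR).2 (by linarith)⟩

/-- Square-integrability criterion at infinity (final step of Theorem 2.1):
given the asymptotics `|h(z) + (Φ/2π) log|z|| ≤ C/|z|` for `|z| ≥ R₀`, the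
function `e^{2h(z)} |z|^{2n}` is integrable on `{|z| > R₀}` iff `n < Φ/2π − 1`. -/
theorem zero_mode_integrability_at_infinity
    (Φ R₀ C : ℝ) (hR₀ : 1 ≤ R₀) (hC : 0 ≤ C)
    (h : ℂ → ℝ) (hmeas : Measurable h)
    (hasym : ∀ z : ℂ, R₀ ≤ ‖z‖ →
      |h z + (Φ / (2 * Real.pi)) * Real.log (‖z‖)| ≤ C / ‖z‖)
    (n : ℕ) :
    (∫⁻ z in {z : ℂ | R₀ < ‖z‖},
        ENNReal.ofReal (Real.exp (2 * h z) * ‖z‖ ^ (2 * n))) < ⊤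
      ↔ (n : ℝ) < Φ / (2 * Real.pi) - 1 := by
  set t : ℝ := Φ / (2 * Real.pi) with ht
  set q : ℝ := 2 * (n : ℝ) - 2 * t with hq
  set S : Set ℂ := {z : ℂ | R₀ < ‖z‖} with hS
  have hR0 : (0:ℝ) < R₀ := lt_of_lt_of_le one_pos hR₀
  have Mq : Measurable fun z : ℂ => ENNReal.ofReal (‖z‖ ^ q) :=
    ((show Measurable fun r : ℝ => r ^ q by fun_prop).comp
      continuous_norm.measurable).ennreal_ofReal
  have Mf : Measurable fun z : ℂ =>
      ENNReal.ofReal (Real.exp (2 * h z) * ‖z‖ ^ (2 * n)) :=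
    ((Real.measurable_exp.comp (measurable_const.mul hmeas)).mul
      ((continuous_norm.measurable).pow_const (2 * n))).ennreal_ofReal
  -- pointwise bounds
  have hpt : ∀ z ∈ S,
      Real.exp (-(2*C)) * ‖z‖ ^ q ≤ Real.exp (2 * h z) * ‖z‖ ^ (2*n)
      ∧ Real.exp (2 * h z) * ‖z‖ ^ (2*n) ≤ Real.exp (2*C) * ‖z‖ ^ q := by
    intro z hz
    set a : ℝ := ‖z‖ with ha
    have ha1 : (1:ℝ) ≤ a := hR₀.trans (le_of_lt hz)
    have ha0 : (0:ℝ) < a := lt_of_lt_of_le one_pos ha1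
    have hb : |h z + t * Real.log a| ≤ C := (hasym z (le_of_lt hz)).trans (div_le_self hC ha1)
    obtain ⟨hb1, hb2⟩ := abs_le.1 hb
    have hexp : a ^ (-(2*t)) = Real.exp (-(2*t) * Real.log a) := by
      rw [Real.rpow_def_of_pos ha0, mul_comm]
    have hnat : a ^ (2*n) = a ^ ((2*(n : ℝ))) := by
      rw [← Real.rpow_natCast a (2*n)]
      push_cast
      ring_nf
    have hiden : ∀ x : ℝ, Real.exp (2*(x + t * Real.log a)) * a ^ q
        = Real.exp (2 * x) * a ^ (2*n) := by
      intro x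
      rw [hnat, show q = (-(2*t)) + 2*(n:ℝ) by ring, Real.rpow_add ha0, hexp,
        ← mul_assoc, ← Real.exp_add]
      congr 2
      ring
    constructor
    · rw [← hiden (h z)]
      apply mul_le_mul_of_nonneg_right _ (Real.rpow_nonneg ha0.le q)
      exact Real.exp_le_exp.2 (by linarith)
    · rw [← hiden (h z)]
      apply mul_le_mul_of_nonneg_right _ (Real.rpow_nonneg ha0.le q)
      exact Real.exp_le_exp.2 (by linarith)
  have hupper : (∫⁻ z in S, ENNReal.ofReal (Real.exp (2 * h z) * ‖z‖ ^ (2 * n)))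
      ≤ ENNReal.ofReal (Real.exp (2*C)) * ∫⁻ z in S, ENNReal.ofReal (‖z‖ ^ q) := by
    rw [← lintegral_const_mul _ Mq]
    refine setLIntegral_mono (measurable_const.mul Mq) fun z hz => ?_
    rw [← ENNReal.ofReal_mul (Real.exp_nonneg _)]
    exact ENNReal.ofReal_le_ofReal (hpt z hz).2
  have hlower : ENNReal.ofReal (Real.exp (-(2*C))) * ∫⁻ z in S, ENNReal.ofReal (‖z‖ ^ q)
      ≤ ∫⁻ z in S, ENNReal.ofReal (Real.exp (2 * h z) * ‖z‖ ^ (2 * n)) := by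
    rw [← lintegral_const_mul _ Mq]
    refine setLIntegral_mono Mf fun z hz => ?_
    rw [← ENNReal.ofReal_mul (Real.exp_nonneg _)]
    exact ENNReal.ofReal_le_ofReal (hpt z hz).1
  constructor
  · intro hfin
    have hlt := lt_of_le_of_lt hlower hfin
    have hI : (∫⁻ z in S, ENNReal.ofReal (‖z‖ ^ q)) < ⊤ := by
      rcases ENNReal.mul_lt_top_iff.1 hlt with ⟨-, hI⟩ | h0 | hI0
      · exact hI
      · exact absurd h0 (by simp [Real.exp_pos])
      · simp [hI0]
    have hq2 : q < -2 := (key_rpow R₀ q hR0).1 hI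
    rw [hq] at hq2; linarith
  · intro hn
    have hq2 : q < -2 := by rw [hq]; linarith
    have hI : (∫⁻ z in S, ENNReal.ofReal (‖z‖ ^ q)) < ⊤ :=
      (key_rpow R₀ q hR0).2 hq2
    refine lt_of_le_of_lt hupper ?_
    exact ENNReal.mul_lt_top ENNReal.ofReal_lt_top hI
end

section
/- Let Φ ∈ ℝ, R₀ ≥ 1, C ≥ 0, and let h : ℂ → ℝ be a measurable function satisfying |h(z) + (Φ/2π)·log|z|| ≤ C/|z| for all z with |z| ≥ R₀. Then the set V = { p ∈ ℂ[X] : ∫_{{z : |z| > R₀}} exp(2h(z))·|p(z)|² dA(z) < ∞ } is a ℂ-linear subspace of the polynomial ring ℂ[X], it is finite dimensional, and its dimension equals max(0, ⌈Φ/(2π) − 1⌉), i.e. the number of natural numbers n with n < Φ/(2π) − 1 (which equals the largest integer strictly smaller than Φ/(2π) when Φ > 2π, and 0 otherwise). -/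
open MeasureTheory Set Real
open scoped ENNReal

theorem lintegral_polar (f : ℝ × ℝ → ℝ≥0∞) :
    (∫⁻ p in polarCoord.target, ENNReal.ofReal p.1 * f (polarCoord.symm p)) = ∫⁻ p, f p := by
  set B : ℝ × ℝ → ℝ × ℝ →L[ℝ] ℝ × ℝ := fun p =>
    LinearMap.toContinuousLinearMap (Matrix.toLin (Module.Basis.finTwoProd ℝ) (Module.Basis.finTwoProd ℝ)
      !![cos p.2, -p.1 * sin p.2; sin p.2, p.1 * cos p.2])
  have A : ∀ p ∈ polarCoord.target, HasFDerivWithinAt polarCoord.symm (B p) polarCoord.target p :=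
    fun p _ => (hasFDerivAt_polarCoord_symm p).hasFDerivWithinAt
  have B_det : ∀ p, (B p).det = p.1 := by
    intro p
    conv_rhs => rw [← one_mul p.1, ← cos_sq_add_sin_sq p.2]
    simp only [B, neg_mul, LinearMap.det_toContinuousLinearMap, LinearMap.det_toLin,
      Matrix.det_fin_two_of, sub_neg_eq_add]
    ring
  symm
  calc
    ∫⁻ p, f p = ∫⁻ p in polarCoord.source, f p := by
      rw [← setLIntegral_univ]
      exact (setLIntegral_congr polarCoord_source_ae_eq_univ).symm
    _ = ∫⁻ p in polarCoord.symm '' polarCoord.target, f p := by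
      rw [polarCoord.symm_image_target_eq_source]
    _ = ∫⁻ p in polarCoord.target, ENNReal.ofReal |(B p).det| * f (polarCoord.symm p) := by
      apply lintegral_image_eq_lintegral_abs_det_fderiv_mul volume
        polarCoord.open_target.measurableSet A
      have := polarCoord.symm.injOn
      rwa [OpenPartialHomeomorph.symm_source] at this
    _ = ∫⁻ p in polarCoord.target, ENNReal.ofReal p.1 * f (polarCoord.symm p) := by
      apply setLIntegral_congr_fun polarCoord.open_target.measurableSet
      intro x hx
      dsimp only
      rw [B_det, abs_of_pos hx.1]

theorem lintegral_cpolar (g : ℂ → ℝ≥0∞) :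
    (∫⁻ p in polarCoord.target, ENNReal.ofReal p.1 * g (Complex.polarCoord.symm p)) = ∫⁻ z, g z := by
  rw [← (Complex.volume_preserving_equiv_real_prod.symm).lintegral_comp_emb
    Complex.measurableEquivRealProd.symm.measurableEmbedding, ← lintegral_polar]
  rfl

theorem lintegral_radial (g : ℝ → ℝ≥0∞) (hg : Measurable g) :
    ∫⁻ z : ℂ, g (‖z‖) =
      ENNReal.ofReal (2 * π) * ∫⁻ r in Ioi (0:ℝ), ENNReal.ofReal r * g r := by
  rw [← lintegral_cpolar (fun z => g (‖z‖))]
  have htarget : polarCoord.target = Ioi (0:ℝ) ×ˢ Ioo (-π) π := rfl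
  calc
    (∫⁻ p in polarCoord.target, ENNReal.ofReal p.1 * g (‖Complex.polarCoord.symm p‖))
        = ∫⁻ p in Ioi (0:ℝ) ×ˢ Ioo (-π) π, ENNReal.ofReal p.1 * g p.1 := by
      rw [htarget]
      apply setLIntegral_congr_fun (measurableSet_Ioi.prod measurableSet_Ioo)
      intro p hp
      dsimp only
      rw [Complex.norm_polarCoord_symm, abs_of_pos hp.1]
    _ = ENNReal.ofReal (2 * π) * ∫⁻ r in Ioi (0:ℝ), ENNReal.ofReal r * g r := by
      rw [Measure.volume_eq_prod, ← Measure.prod_restrict,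
        lintegral_prod _ (Measurable.aemeasurable (by fun_prop))]
      simp only [lintegral_const, Measure.restrict_apply MeasurableSet.univ, univ_inter,
        Real.volume_Ioo]
      rw [lintegral_mul_const _ (by fun_prop : Measurable fun r : ℝ => ENNReal.ofReal r * g r),
        show ENNReal.ofReal (π - -π) = ENNReal.ofReal (2*π) by ring_nf, mul_comm]

theorem lintegral_rpow_Ioi_lt_top {R s : ℝ} (hR : 0 < R) (hs : s < -1) :
    ∫⁻ r in Ioi R, ENNReal.ofReal (r ^ s) < ⊤ :=
  (integrableOn_Ioi_rpow_of_lt hs hR).lintegral_lt_top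

theorem lintegral_rpow_Ioi_eq_top {R s : ℝ} (hR : 0 < R) (hs : -1 ≤ s) :
    ∫⁻ r in Ioi R, ENNReal.ofReal (r ^ s) = ⊤ := by
  by_contra hne
  have hpos : 0 ≤ᵐ[volume.restrict (Ioi R)] fun r : ℝ => r ^ s := by
    filter_upwards [ae_restrict_mem measurableSet_Ioi] with r hr
    exact Real.rpow_nonneg (le_of_lt (hR.trans hr)) s
  have hint : IntegrableOn (fun r : ℝ => r ^ s) (Ioi R) := by
    refine ⟨(ContinuousOn.aestronglyMeasurable ?_ measurableSet_Ioi), ?_⟩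
    · exact ContinuousOn.rpow_const continuousOn_id
        (fun x hx => Or.inl (ne_of_gt (hR.trans hx)))
    rw [hasFiniteIntegral_iff_ofReal hpos]
    exact lt_top_iff_ne_top.2 hne
  rw [integrableOn_Ioi_rpow_iff hR] at hint
  exact absurd hint (not_lt.2 hs)

theorem lintegral_abs_rpow_complex {R β : ℝ} (hR : 0 < R) :
    ∫⁻ z in {z : ℂ | R < ‖z‖}, ENNReal.ofReal (‖z‖ ^ β) =
      ENNReal.ofReal (2*π) * ∫⁻ r in Ioi R, ENNReal.ofReal (r ^ (β+1)) := by
  set g : ℝ → ℝ≥0∞ :=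
    (Ioi R).indicator (fun r => ENNReal.ofReal (Real.exp (β * Real.log r))) with hgdef
  have hg : Measurable g :=
    Measurable.indicator
      (Measurable.ennreal_ofReal (Real.measurable_exp.comp (Real.measurable_log.const_mul β)))
      measurableSet_Ioi
  have hS : MeasurableSet {z : ℂ | R < ‖z‖} :=
    (isOpen_lt continuous_const continuous_norm).measurableSet
  have h1 : ∫⁻ z in {z : ℂ | R < ‖z‖}, ENNReal.ofReal (‖z‖ ^ β)
      = ∫⁻ z : ℂ, g (‖z‖) := by
    rw [← lintegral_indicator hS]
    refine lintegral_congr fun z => ?_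
    by_cases hz : R < ‖z‖
    · rw [indicator_of_mem (show z ∈ {z : ℂ | R < ‖z‖} from hz), hgdef,
        indicator_of_mem (show ‖z‖ ∈ Ioi R from hz),
        Real.rpow_def_of_pos (hR.trans hz), mul_comm]
    · rw [indicator_of_notMem (show z ∉ {z : ℂ | R < ‖z‖} from hz), hgdef,
        indicator_of_notMem (show ‖z‖ ∉ Ioi R from hz)]
  rw [h1, lintegral_radial g hg]
  congr 1
  have h2 : ∀ r ∈ Ioi (0:ℝ), ENNReal.ofReal r * g r
      = (Ioi R).indicator (fun r => ENNReal.ofReal (r ^ (β+1))) r := by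
    intro r _
    by_cases hr : R < r
    · rw [hgdef, indicator_of_mem (show r ∈ Ioi R from hr), indicator_of_mem (show r ∈ Ioi R from hr),
        mul_comm β (Real.log r), ← Real.rpow_def_of_pos (hR.trans hr),
        ← ENNReal.ofReal_mul (le_of_lt (hR.trans hr)),
        Real.rpow_add (hR.trans hr), Real.rpow_one, mul_comm]
    · rw [hgdef, indicator_of_notMem (show r ∉ Ioi R from hr),
        indicator_of_notMem (show r ∉ Ioi R from hr), mul_zero]
  calc ∫⁻ r in Ioi (0:ℝ), ENNReal.ofReal r * g r
      = ∫⁻ r in Ioi (0:ℝ), (Ioi R).indicator (fun r => ENNReal.ofReal (r ^ (β+1))) r := by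
        refine setLIntegral_congr_fun measurableSet_Ioi ?_
        intro r hr; exact h2 r hr
    _ = ∫⁻ r in Ioi R, ENNReal.ofReal (r ^ (β+1)) := by
        rw [lintegral_indicator measurableSet_Ioi, Measure.restrict_restrict measurableSet_Ioi,
          inter_eq_self_of_subset_left (Ioi_subset_Ioi (le_of_lt hR))]

theorem lintegral_abs_rpow_lt_top {R β : ℝ} (hR : 0 < R) (hβ : β < -2) :
    ∫⁻ z in {z : ℂ | R < ‖z‖}, ENNReal.ofReal (‖z‖ ^ β) < ⊤ := by
  rw [lintegral_abs_rpow_complex hR]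
  exact ENNReal.mul_lt_top ENNReal.ofReal_lt_top
    (lintegral_rpow_Ioi_lt_top hR (by linarith))

theorem lintegral_abs_rpow_eq_top {R β : ℝ} (hR : 0 < R) (hβ : -2 ≤ β) :
    ∫⁻ z in {z : ℂ | R < ‖z‖}, ENNReal.ofReal (‖z‖ ^ β) = ⊤ := by
  rw [lintegral_abs_rpow_complex hR, lintegral_rpow_Ioi_eq_top hR (by linarith),
    ENNReal.mul_top]
  simp only [ne_eq, ENNReal.ofReal_eq_zero, not_le]
  positivity

theorem poly_upper (p : Polynomial ℂ) : ∃ K : ℝ, 0 ≤ K ∧ ∀ z : ℂ, 1 ≤ ‖z‖ →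
    ‖p.eval z‖ ≤ K * ‖z‖ ^ p.natDegree := by
  refine ⟨∑ i ∈ Finset.range (p.natDegree + 1), ‖p.coeff i‖,
    Finset.sum_nonneg fun i _ => (norm_nonneg _), fun z hz => ?_⟩
  rw [Polynomial.eval_eq_sum_range, Finset.sum_mul]
  refine (norm_sum_le _ _).trans (Finset.sum_le_sum fun i hi => ?_)
  rw [norm_mul, norm_pow]
  exact mul_le_mul_of_nonneg_left
    (pow_le_pow_right₀ hz (Nat.lt_succ_iff.mp (Finset.mem_range.mp hi)))
    (norm_nonneg _)

theorem poly_lower (p : Polynomial ℂ) (hp : p ≠ 0) : ∃ c : ℝ, 0 < c ∧ ∃ R : ℝ, 1 ≤ R ∧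
    ∀ z : ℂ, R ≤ ‖z‖ →
      c * ‖z‖ ^ p.natDegree ≤ ‖p.eval z‖ := by
  set d := p.natDegree with hd
  set a := p.leadingCoeff with ha
  have ha0 : a ≠ 0 := Polynomial.leadingCoeff_ne_zero.mpr hp
  have haa : 0 < ‖a‖ := by simpa using ha0
  rcases Nat.eq_zero_or_pos d with hd0 | hd1
  · refine ⟨‖a‖, haa, 1, le_refl 1, fun z hz => ?_⟩
    have := Polynomial.eq_C_of_natDegree_eq_zero hd0
    rw [hd0, pow_zero, mul_one, this, Polynomial.eval_C]
    rw [this] at ha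
    simp [ha]
  · set q := p.eraseLead with hq
    obtain ⟨K, hK0, hK⟩ := poly_upper q
    have hqd : q.natDegree ≤ d - 1 := Polynomial.eraseLead_natDegree_le p
    refine ⟨‖a‖ / 2, by positivity,
      max 1 (2 * K / ‖a‖), le_max_left _ _, fun z hz => ?_⟩
    set r := ‖z‖ with hr
    have hr1 : 1 ≤ r := le_trans (le_max_left _ _) hz
    have hr0 : 0 < r := lt_of_lt_of_le zero_lt_one hr1
    have hz2 : 2 * K / ‖a‖ ≤ r := le_trans (le_max_right _ _) hz
    have hqe : ‖q.eval z‖ ≤ K * r ^ (d - 1) := by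
      refine (hK z hr1).trans ?_
      exact mul_le_mul_of_nonneg_left (pow_le_pow_right₀ hr1 hqd) hK0
    have hpq : p.eval z = q.eval z + a * z ^ d := by
      conv_lhs => rw [← Polynomial.eraseLead_add_C_mul_X_pow p]
      rw [Polynomial.eval_add, Polynomial.eval_mul, Polynomial.eval_C, Polynomial.eval_pow,
        Polynomial.eval_X]
    have habs : ‖a‖ * r ^ d - K * r ^ (d - 1) ≤ ‖p.eval z‖ := by
      rw [hpq]
      have h := norm_add_le (q.eval z + a * z ^ d) (-(q.eval z))
      have h2 : (q.eval z + a * z ^ d) + -(q.eval z) = a * z ^ d := by ring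
      rw [h2, norm_neg] at h
      have h3 : ‖a * z ^ d‖ = ‖a‖ * r ^ d := by
        rw [norm_mul, norm_pow]
      nlinarith [hqe]
    have h2K : 2 * K ≤ r * ‖a‖ := (div_le_iff₀ haa).mp hz2
    have hKr : K * r ^ (d - 1) ≤ ‖a‖ / 2 * r ^ d := by
      have hstep : K * r ^ (d - 1) ≤ (‖a‖ / 2 * r) * r ^ (d - 1) := by
        apply mul_le_mul_of_nonneg_right _ (pow_nonneg hr0.le _)
        nlinarith
      refine hstep.trans (le_of_eq ?_)
      have hd' : d = (d - 1) + 1 := by omega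
      have hpow : r ^ d = r ^ (d - 1) * r := by
        conv_lhs => rw [hd', pow_succ]
      rw [hpow]
      ring
    nlinarith [habs, hKr]


/-- Dimension count of spin-up zero modes in Theorem 2.1 (Aharonov–Casher on the
plane with holes): the set of polynomials `p` with `e^{h} p(z)` square integrable
at infinity is a finite-dimensional `ℂ`-subspace of `ℂ[X]` of dimension
`max(0, ⌈Φ/2π − 1⌉)`, i.e. the number of naturals `n` with `n < Φ/2π − 1`. -/
theorem zero_mode_space_dimension
    (Φ R₀ C : ℝ) (hR₀ : 1 ≤ R₀) (hC : 0 ≤ C)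
    (h : ℂ → ℝ) (hmeas : Measurable h)
    (hasym : ∀ z : ℂ, R₀ ≤ ‖z‖ →
      |h z + (Φ / (2 * Real.pi)) * Real.log (‖z‖)| ≤ C / ‖z‖) :
    ∃ V : Submodule ℂ (Polynomial ℂ),
      (∀ p : Polynomial ℂ, p ∈ V ↔
        (∫⁻ z in {z : ℂ | R₀ < ‖z‖},
            ENNReal.ofReal (Real.exp (2 * h z) * ‖Polynomial.eval z p‖ ^ 2)) < ⊤) ∧
      FiniteDimensional ℂ V ∧
      Module.finrank ℂ V = (⌈Φ / (2 * Real.pi) - 1⌉).toNat := by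
  set α : ℝ := Φ / (2 * Real.pi) with hαdef
  set n : ℕ := (⌈α - 1⌉).toNat with hndef
  have hR₀0 : (0:ℝ) < R₀ := lt_of_lt_of_le zero_lt_one hR₀
  have hS : MeasurableSet {z : ℂ | R₀ < ‖z‖} :=
    (isOpen_lt continuous_const continuous_norm).measurableSet
  refine ⟨Polynomial.degreeLT ℂ n, fun p => ⟨fun hp => ?_, fun hint => ?_⟩, ?_, ?_⟩
  · -- mem → finite integral
    by_cases hp0 : p = 0
    · subst hp0
      simp
    · have hdn : p.natDegree < n := (Polynomial.natDegree_lt_iff_degree_lt hp0).mpr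
        (Polynomial.mem_degreeLT.mp hp)
      set d := p.natDegree with hddef
      have hceil : (d:ℤ) < ⌈α - 1⌉ := by
        have h0 : (0:ℤ) ≤ ⌈α - 1⌉ := by
          by_contra hneg
          push_neg at hneg
          have hn0 : n = 0 := by rw [hndef]; exact Int.toNat_of_nonpos hneg.le
          omega
        have hlt : (d:ℤ) < (n:ℤ) := by exact_mod_cast hdn
        rwa [hndef, Int.toNat_of_nonneg h0] at hlt
      have hdα : (d:ℝ) < α - 1 := by
        have := Int.lt_ceil.mp hceil
        push_cast at this
        exact this
      obtain ⟨K, hK0, hK⟩ := poly_upper p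
      set β : ℝ := -(2*α) + ((d*2 : ℕ) : ℝ) with hβdef
      have hβ : β < -2 := by rw [hβdef]; push_cast; linarith
      have hbound : ∀ z ∈ {z : ℂ | R₀ < ‖z‖},
          ENNReal.ofReal (Real.exp (2 * h z) * ‖p.eval z‖ ^ 2)
            ≤ ENNReal.ofReal (Real.exp (2*C) * K^2) * ENNReal.ofReal (‖z‖ ^ β) := by
        intro z hz
        set r := ‖z‖ with hrdef
        have hrR : R₀ ≤ r := le_of_lt hz
        have hr1 : 1 ≤ r := hR₀.trans hrR
        have hr0 : (0:ℝ) < r := lt_of_lt_of_le zero_lt_one hr1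
        have hh := hasym z hrR
        have hCr : C / r ≤ C := by
          rw [div_le_iff₀ hr0]; nlinarith
        have hhle : h z ≤ C - α * Real.log r := by
          have h2 := (abs_le.mp hh).2
          linarith
        have hexp : Real.exp (2 * h z) ≤ Real.exp (2*C) * r ^ (-(2*α)) := by
          rw [Real.rpow_def_of_pos hr0, ← Real.exp_add]
          apply Real.exp_le_exp.mpr
          linarith
        have hpoly : ‖p.eval z‖ ^ 2 ≤ K^2 * r ^ (d*2 : ℕ) := by
          have h1 := hK z hr1
          have h2 : ‖p.eval z‖ ^ 2 ≤ (K * r ^ d)^2 :=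
            pow_le_pow_left₀ (norm_nonneg _) h1 2
          calc ‖p.eval z‖ ^ 2 ≤ (K * r ^ d)^2 := h2
            _ = K^2 * r ^ (d*2 : ℕ) := by rw [mul_pow, ← pow_mul]
        rw [← ENNReal.ofReal_mul (by positivity)]
        apply ENNReal.ofReal_le_ofReal
        have hsplit : Real.exp (2*C) * K^2 * r ^ β
            = (Real.exp (2*C) * r ^ (-(2*α))) * (K^2 * r ^ (d*2 : ℕ)) := by
          rw [hβdef, Real.rpow_add hr0, Real.rpow_natCast]
          ring
        rw [hsplit]
        exact mul_le_mul hexp hpoly (by positivity) (by positivity)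
      calc ∫⁻ z in {z : ℂ | R₀ < ‖z‖},
            ENNReal.ofReal (Real.exp (2 * h z) * ‖p.eval z‖ ^ 2)
          ≤ ∫⁻ z in {z : ℂ | R₀ < ‖z‖},
            ENNReal.ofReal (Real.exp (2*C) * K^2) * ENNReal.ofReal (‖z‖ ^ β) := by
            refine lintegral_mono_ae ?_
            filter_upwards [ae_restrict_mem hS] with z hz using hbound z hz
        _ = ENNReal.ofReal (Real.exp (2*C) * K^2) *
            ∫⁻ z in {z : ℂ | R₀ < ‖z‖}, ENNReal.ofReal (‖z‖ ^ β) :=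
            lintegral_const_mul' _ _ ENNReal.ofReal_ne_top
        _ < ⊤ := ENNReal.mul_lt_top ENNReal.ofReal_lt_top
            (lintegral_abs_rpow_lt_top hR₀0 hβ)
  · -- finite integral → mem
    by_contra hp
    have hp0 : p ≠ 0 := by rintro rfl; exact hp (Submodule.zero_mem _)
    set d := p.natDegree with hddef
    have hnd : n ≤ d := by
      by_contra hcon
      push_neg at hcon
      exact hp (Polynomial.mem_degreeLT.mpr
        ((Polynomial.natDegree_lt_iff_degree_lt hp0).mp hcon))
    have hdα : α - 1 ≤ (d:ℝ) := by
      have h1 : α - 1 ≤ (⌈α - 1⌉ : ℝ) := Int.le_ceil _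
      have h2 : (⌈α - 1⌉ : ℤ) ≤ (n : ℤ) := Int.self_le_toNat _
      have h3 : (n:ℝ) ≤ (d:ℝ) := by exact_mod_cast hnd
      have h2' : ((⌈α - 1⌉ : ℤ):ℝ) ≤ (n:ℝ) := by exact_mod_cast h2
      linarith
    obtain ⟨c, hc0, R, hR1, hlow⟩ := poly_lower p hp0
    set R₁ : ℝ := max R₀ R with hR₁def
    have hR₁1 : 1 ≤ R₁ := le_trans hR₀ (le_max_left _ _)
    have hR₁0 : (0:ℝ) < R₁ := lt_of_lt_of_le zero_lt_one hR₁1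
    have hS₁ : MeasurableSet {z : ℂ | R₁ < ‖z‖} :=
      (isOpen_lt continuous_const continuous_norm).measurableSet
    set β : ℝ := -(2*α) + ((d*2 : ℕ) : ℝ) with hβdef
    have hβ : -2 ≤ β := by rw [hβdef]; push_cast; linarith
    have hbound : ∀ z ∈ {z : ℂ | R₁ < ‖z‖},
        ENNReal.ofReal (Real.exp (-(2*C)) * c^2) * ENNReal.ofReal (‖z‖ ^ β)
          ≤ ENNReal.ofReal (Real.exp (2 * h z) * ‖p.eval z‖ ^ 2) := by
      intro z hz
      set r := ‖z‖ with hrdef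
      have hrR₀ : R₀ ≤ r := le_of_lt (lt_of_le_of_lt (le_max_left _ _) hz)
      have hrR : R ≤ r := le_of_lt (lt_of_le_of_lt (le_max_right _ _) hz)
      have hr1 : 1 ≤ r := hR₀.trans hrR₀
      have hr0 : (0:ℝ) < r := lt_of_lt_of_le zero_lt_one hr1
      have hh := hasym z hrR₀
      have hCr : C / r ≤ C := by
        rw [div_le_iff₀ hr0]; nlinarith
      have hhge : -C - α * Real.log r ≤ h z := by
        have h2 := (abs_le.mp hh).1
        linarith
      have hexp : Real.exp (-(2*C)) * r ^ (-(2*α)) ≤ Real.exp (2 * h z) := by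
        rw [Real.rpow_def_of_pos hr0, ← Real.exp_add]
        apply Real.exp_le_exp.mpr
        linarith
      have hpoly : c^2 * r ^ (d*2 : ℕ) ≤ ‖p.eval z‖ ^ 2 := by
        have h1 := hlow z hrR
        have h2 : (c * r ^ d)^2 ≤ ‖p.eval z‖ ^ 2 :=
          pow_le_pow_left₀ (by positivity) h1 2
        calc c^2 * r ^ (d*2 : ℕ) = (c * r ^ d)^2 := by rw [mul_pow, ← pow_mul]
          _ ≤ ‖p.eval z‖ ^ 2 := h2
      rw [← ENNReal.ofReal_mul (by positivity)]
      apply ENNReal.ofReal_le_ofReal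
      have hsplit : Real.exp (-(2*C)) * c^2 * r ^ β
          = (Real.exp (-(2*C)) * r ^ (-(2*α))) * (c^2 * r ^ (d*2 : ℕ)) := by
        rw [hβdef, Real.rpow_add hr0, Real.rpow_natCast]
        ring
      rw [hsplit]
      exact mul_le_mul hexp hpoly (by positivity) (Real.exp_nonneg _)
    have hsub : {z : ℂ | R₁ < ‖z‖} ⊆ {z : ℂ | R₀ < ‖z‖} :=
      fun z hz => show R₀ < ‖z‖ from lt_of_le_of_lt (le_max_left _ _) hz
    have htople : (⊤ : ℝ≥0∞) ≤ ∫⁻ z in {z : ℂ | R₀ < ‖z‖},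
        ENNReal.ofReal (Real.exp (2 * h z) * ‖p.eval z‖ ^ 2) := by
      calc (⊤ : ℝ≥0∞) = ENNReal.ofReal (Real.exp (-(2*C)) * c^2) *
            ∫⁻ z in {z : ℂ | R₁ < ‖z‖}, ENNReal.ofReal (‖z‖ ^ β) := by
            rw [lintegral_abs_rpow_eq_top hR₁0 hβ, ENNReal.mul_top]
            simp only [ne_eq, ENNReal.ofReal_eq_zero, not_le]
            positivity
        _ = ∫⁻ z in {z : ℂ | R₁ < ‖z‖},
            ENNReal.ofReal (Real.exp (-(2*C)) * c^2) * ENNReal.ofReal (‖z‖ ^ β) :=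
            (lintegral_const_mul' _ _ ENNReal.ofReal_ne_top).symm
        _ ≤ ∫⁻ z in {z : ℂ | R₁ < ‖z‖},
            ENNReal.ofReal (Real.exp (2 * h z) * ‖p.eval z‖ ^ 2) := by
            refine lintegral_mono_ae ?_
            filter_upwards [ae_restrict_mem hS₁] with z hz using hbound z hz
        _ ≤ _ := lintegral_mono' (Measure.restrict_mono hsub le_rfl) le_rfl
    exact hint.ne (top_unique htople)
  · exact (Polynomial.degreeLTEquiv ℂ n).symm.finiteDimensional
  · rw [(Polynomial.degreeLTEquiv ℂ n).finrank_eq, Module.finrank_fin_fun]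
end

section
/- Let c ∈ ℝ \ ℤ and let ⟨c⟩ ∈ (0,1) be the unique number in (0,1) differing from c by an integer. Then there exists a function F : ℂ → ℂ that is analytic on the half-plane {s ∈ ℂ : Re s > −1}, such that for every s ∈ ℂ with Re s > 1 one has F(s) = Σ_{n∈ℤ} sign(n − c)·|n − c|^{−s} (the series converging absolutely, with |n−c|^{−s} = exp(−s·log|n−c|)), and such that F(0) = −1 + 2⟨c⟩. Moreover, if c ∈ ℤ then the analogous function obtained by summing over n ∈ ℤ with n ≠ c vanishes identically, so its value at 0 is 0. -/
open Complex HurwitzZeta Set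

noncomputable def etaG (a : ℝ) (n : ℕ) (s : ℂ) : ℂ :=
  (((n : ℝ) + a : ℝ) : ℂ) ^ (-s) - (((n : ℝ) + 1 - a : ℝ) : ℂ) ^ (-s)
    + s * ((2 * a - 1 : ℝ) : ℂ) * (((n : ℝ) + 1 : ℝ) : ℂ) ^ (-s - 1)

lemma eta_cpow_sub_bound {p q : ℝ} (hp : 0 < p) (hpq : p ≤ q) (w : ℂ) {M : ℝ}
    (hM : ∀ t ∈ Icc p q, ‖w‖ * t ^ (w.re - 1) ≤ M) :
    ‖(q:ℂ) ^ w - (p:ℂ) ^ w‖ ≤ M * (q - p) := by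
  have key := Convex.norm_image_sub_le_of_norm_hasDerivWithin_le
    (f := fun t : ℝ => (t : ℂ) ^ w) (f' := fun t : ℝ => w * (t : ℂ) ^ (w - 1))
    (s := Icc p q) (C := M) ?_ ?_ (convex_Icc p q) ⟨le_refl p, hpq⟩ ⟨hpq, le_refl q⟩
  · simpa [Real.norm_of_nonneg (sub_nonneg.mpr hpq)] using key
  · intro t ht
    have htp : 0 < t := lt_of_lt_of_le hp ht.1
    exact ((hasStrictDerivAt_cpow_const
      (ofReal_mem_slitPlane.mpr htp)).hasDerivAt.comp_ofReal).hasDerivWithinAt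
  · intro t ht
    have htp : 0 < t := lt_of_lt_of_le hp ht.1
    calc ‖w * (t : ℂ) ^ (w - 1)‖ = ‖w‖ * t ^ (w.re - 1) := by
          rw [norm_mul, norm_cpow_eq_rpow_re_of_pos htp,
            sub_re, one_re]
      _ ≤ M := hM t ht

lemma etaG_bound {a : ℝ} (ha : a ∈ Ioo (0:ℝ) 1) (n : ℕ) {s : ℂ} {σ R : ℝ}
    (hσ : -1 < σ) (hσs : σ ≤ s.re) (hsR : ‖s‖ ≤ R) :
    ‖etaG a n s‖ ≤ (R * (R + 1) * (min a (1 - a)) ^ (-R - 2)) * ((n : ℝ) + 1) ^ (-σ - 2) := by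
  set m : ℝ := min a (1 - a) with hm
  have hm0 : 0 < m := lt_min ha.1 (by linarith [ha.2])
  have hm1 : m ≤ 1 := le_trans (min_le_left _ _) ha.2.le
  have hma : m ≤ a := min_le_left _ _
  have hmb : m ≤ 1 - a := min_le_right _ _
  have hR0 : 0 ≤ R := le_trans (norm_nonneg s) hsR
  have hsre : s.re ≤ R := le_trans (Complex.re_le_norm s) hsR
  have hn0 : (0:ℝ) ≤ (n:ℝ) := n.cast_nonneg
  -- key pointwise bound for rpow
  have hkey : ∀ u : ℝ, (n:ℝ) + m ≤ u → u ^ (-s.re - 2) ≤ m ^ (-R - 2) * ((n:ℝ)+1) ^ (-σ - 2) := by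
    intro u hu
    have hu1 : ((n:ℝ) + 1) * m ≤ u := by nlinarith
    have hu0 : 0 < ((n:ℝ) + 1) * m := by positivity
    have h1 : u ^ (-s.re - 2) ≤ (((n:ℝ)+1) * m) ^ (-s.re - 2) :=
      Real.rpow_le_rpow_of_nonpos hu0 hu1 (by linarith)
    rw [Real.mul_rpow (by positivity) hm0.le] at h1
    refine h1.trans ?_
    rw [mul_comm]
    have h2 : ((n:ℝ)+1) ^ (-s.re - 2) ≤ ((n:ℝ)+1) ^ (-σ - 2) :=
      Real.rpow_le_rpow_of_exponent_le (by linarith) (by linarith)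
    have h3 : m ^ (-s.re - 2) ≤ m ^ (-R - 2) :=
      Real.rpow_le_rpow_of_exponent_ge hm0 hm1 (by linarith)
    exact mul_le_mul h3 h2 (by positivity) (by positivity)
  set A : ℝ := (n:ℝ) + a
  set B : ℝ := (n:ℝ) + 1 - a
  set CC : ℝ := (n:ℝ) + 1
  set K : ℂ := ((CC : ℝ) : ℂ) ^ (-s - 1)
  set M2 : ℝ := (R+1) * (m ^ (-R - 2) * ((n:ℝ)+1) ^ (-σ - 2)) with hM2
  have hM2nn : 0 ≤ M2 := by positivity
  -- inner bound on the derivative difference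
  have hmid : ∀ t : ℝ, (n:ℝ) + m ≤ t → t ≤ CC →
      ‖K - ((t:ℝ):ℂ) ^ (-s - 1)‖ ≤ M2 * (CC - t) := by
    intro t h1 h2
    have ht0 : 0 < t := lt_of_lt_of_le (by positivity) h1
    have := eta_cpow_sub_bound ht0 h2 (-s - 1) (M := M2) ?_
    · simpa [K] using this
    · intro u hu
      have hu0 : (n:ℝ) + m ≤ u := le_trans h1 hu.1
      have h5 : ‖-s - 1‖ ≤ R + 1 := by
        calc ‖-s - 1‖ = ‖s + 1‖ := by rw [show -s - 1 = -(s+1) by ring, norm_neg]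
          _ ≤ ‖s‖ + ‖(1:ℂ)‖ := norm_add_le _ _
          _ ≤ R + 1 := by rw [norm_one]; linarith
      have h6 : u ^ ((-s - 1).re - 1) ≤ m ^ (-R - 2) * ((n:ℝ)+1) ^ (-σ - 2) := by
        have : (-s - 1).re - 1 = -s.re - 2 := by simp [Complex.sub_re, Complex.neg_re]; ring
        rw [this]
        exact hkey u hu0
      have hu1 : 0 < u := lt_of_lt_of_le (by positivity) hu0
      rw [hM2]
      exact mul_le_mul h5 h6 (by positivity) (by positivity)
  -- outer MVT
  have hABm : (n:ℝ) + m ≤ A ∧ (n:ℝ) + m ≤ B ∧ A ≤ CC ∧ B ≤ CC := by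
    refine ⟨by simp [A]; linarith, by simp [B]; linarith, by simp [A, CC]; linarith [ha.2], by simp [B, CC]; linarith [ha.1]⟩
  have houter := Convex.norm_image_sub_le_of_norm_hasDerivWithin_le
    (f := fun t : ℝ => ((t:ℝ):ℂ) ^ (-s) + ((t:ℝ):ℂ) * (s * K))
    (f' := fun t : ℝ => (-s) * ((t:ℝ):ℂ) ^ (-s - 1) + s * K)
    (s := Icc ((n:ℝ) + m) CC) (C := R * M2) ?_ ?_ (convex_Icc _ _)
    (x := B) (y := A) ⟨hABm.2.1, hABm.2.2.2⟩ ⟨hABm.1, hABm.2.2.1⟩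
  · -- conclude
    have hAB : ‖(A:ℝ) - B‖ ≤ 1 := by
      rw [Real.norm_eq_abs, abs_le]
      constructor <;> simp [A, B] <;> linarith [ha.1, ha.2]
    have hgf : etaG a n s = (fun t : ℝ => ((t:ℝ):ℂ) ^ (-s) + ((t:ℝ):ℂ) * (s * K)) A
        - (fun t : ℝ => ((t:ℝ):ℂ) ^ (-s) + ((t:ℝ):ℂ) * (s * K)) B := by
      simp only [etaG, A, B, CC, K]
      push_cast
      ring
    rw [hgf]
    calc ‖_ - _‖ ≤ R * M2 * ‖A - B‖ := houter
      _ ≤ R * M2 * 1 := by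
          refine mul_le_mul_of_nonneg_left hAB (by positivity)
      _ = R * (R + 1) * m ^ (-R - 2) * ((n:ℝ)+1) ^ (-σ - 2) := by rw [hM2]; ring
      _ ≤ _ := le_of_eq (by rw [hm]; try ring)
  · intro t ht
    have ht0 : 0 < t := lt_of_lt_of_le (by positivity) ht.1
    refine HasDerivWithinAt.add ?_ ?_
    · exact ((hasStrictDerivAt_cpow_const
        (ofReal_mem_slitPlane.mpr ht0)).hasDerivAt.comp_ofReal (e := fun z => z ^ (-s))
        (e' := (-s) * ((t:ℝ):ℂ) ^ (-s - 1))).hasDerivWithinAt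
    · have h8 : HasDerivAt (fun t : ℝ => ((t:ℝ):ℂ)) 1 t := by
        simpa using (hasDerivAt_id t).ofReal_comp
      simpa using (h8.mul_const (s * K)).hasDerivWithinAt
  · intro t ht
    have ht0 : 0 < t := lt_of_lt_of_le (by positivity) ht.1
    show ‖(-s) * ((t:ℝ):ℂ) ^ (-s - 1) + s * K‖ ≤ R * M2
    have h9 : (-s) * ((t:ℝ):ℂ) ^ (-s - 1) + s * K = s * (K - ((t:ℝ):ℂ) ^ (-s - 1)) := by ring
    rw [h9, norm_mul]
    have h10 := hmid t ht.1 ht.2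
    have h11 : CC - t ≤ 1 := by
      have := ht.1; simp only [CC] at *; linarith
    calc ‖s‖ * ‖K - ((t:ℝ):ℂ) ^ (-s - 1)‖ ≤ R * (M2 * (CC - t)) := by
          exact mul_le_mul hsR (h10) (norm_nonneg _) hR0
      _ ≤ R * (M2 * 1) := by
          refine mul_le_mul_of_nonneg_left (mul_le_mul_of_nonneg_left h11 hM2nn) hR0
      _ = R * M2 := by ring

lemma eta_summable_aux {p : ℝ} (hp : 1 < p) :
    Summable (fun n : ℕ => ((n : ℝ) + 1) ^ (-p)) := by
  have h := (summable_nat_add_iff 1).mpr (Real.summable_one_div_nat_rpow.mpr hp)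
  refine h.congr fun n => ?_
  rw [one_div, ← Real.rpow_neg (by positivity)]
  push_cast
  ring_nf

noncomputable def etaH (a : ℝ) : ℂ → ℂ := fun s => ∑' n : ℕ, etaG a n s

lemma etaG_differentiable (a : ℝ) (ha : a ∈ Set.Ioo (0:ℝ) 1) (n : ℕ) :
    Differentiable ℂ (etaG a n) := by
  have h1 : ((((n : ℝ) + a : ℝ)) : ℂ) ≠ 0 := by
    simp only [ne_eq, ofReal_eq_zero]
    exact ne_of_gt (by nlinarith [ha.1, n.cast_nonneg (α := ℝ)])
  have h2 : ((((n : ℝ) + 1 - a : ℝ)) : ℂ) ≠ 0 := by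
    simp only [ne_eq, ofReal_eq_zero]
    nlinarith [ha.2, n.cast_nonneg (α := ℝ)]
  have h3 : ((((n : ℝ) + 1 : ℝ)) : ℂ) ≠ 0 := by
    simp only [ne_eq, ofReal_eq_zero]
    positivity
  refine ((differentiable_neg.const_cpow (Or.inl h1)).sub
    (differentiable_neg.const_cpow (Or.inl h2))).add ?_
  exact (differentiable_id.mul (differentiable_const _)).mul
    ((differentiable_neg.sub (differentiable_const 1)).const_cpow (Or.inl h3))

lemma etaH_differentiableOn {a : ℝ} (ha : a ∈ Set.Ioo (0:ℝ) 1) :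
    DifferentiableOn ℂ (etaH a) {s : ℂ | -1 < s.re} := by
  intro s₀ hs₀
  have hs₀' : -1 < s₀.re := hs₀
  set σ : ℝ := (s₀.re - 1) / 2 with hσdef
  set R : ℝ := ‖s₀‖ + 1 with hRdef
  have hσ : -1 < σ := by simp only [hσdef]; linarith
  set V : Set ℂ := {s : ℂ | σ < s.re} ∩ Metric.ball 0 R with hV
  have hVo : IsOpen V := ((isOpen_lt continuous_const Complex.continuous_re).inter
    Metric.isOpen_ball)
  have hs₀V : s₀ ∈ V := by
    constructor
    · simp only [mem_setOf_eq, hσdef]; linarith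
    · simp only [Metric.mem_ball, dist_zero_right, hRdef]; linarith
  have hdiff : DifferentiableOn ℂ (fun s => ∑' n : ℕ, etaG a n s) V := by
    refine differentiableOn_tsum_of_summable_norm
      (u := fun n : ℕ => (R * (R + 1) * (min a (1 - a)) ^ (-R - 2)) * ((n : ℝ) + 1) ^ (-σ - 2))
      ?_ (fun n => (etaG_differentiable a ha n).differentiableOn) hVo ?_
    · refine Summable.mul_left _ ?_
      have : -(-σ - 2) = σ + 2 := by ring
      refine (eta_summable_aux (p := σ + 2) (by linarith)).congr fun n => ?_
      rw [show -(σ + 2) = -σ - 2 by ring]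
    · intro n w hw
      exact etaG_bound ha n hσ (le_of_lt hw.1) (by
        have := hw.2
        simp only [Metric.mem_ball, dist_zero_right] at this
        linarith)
  exact ((hdiff.differentiableAt (hVo.mem_nhds hs₀V)).differentiableWithinAt)

lemma etaH_zero {a : ℝ} : etaH a 0 = 0 := by
  have : ∀ n : ℕ, etaG a n 0 = 0 := by
    intro n
    simp [etaG]
  simp [etaH, this]

noncomputable def etaZ : ℂ → ℂ :=
  fun s => s * (riemannZeta (s + 1) - (1 / s) * (Complex.Gammaℝ (s + 1))⁻¹)
    + (Complex.Gammaℝ (s + 1))⁻¹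

lemma etaZ_zero : etaZ 0 = 1 := by
  simp [etaZ, Complex.Gammaℝ_one]

lemma etaZ_eq {s : ℂ} (hs : s ≠ 0) : etaZ s = s * riemannZeta (s + 1) := by
  simp only [etaZ]
  have h : s * ((1 / s) * (Complex.Gammaℝ (s + 1))⁻¹) = (Complex.Gammaℝ (s + 1))⁻¹ := by
    rw [one_div, ← mul_assoc, mul_inv_cancel₀ hs, one_mul]
  rw [mul_sub, h]
  ring

lemma etaZ_differentiableAt (s₀ : ℂ) : DifferentiableAt ℂ etaZ s₀ := by
  rcases eq_or_ne s₀ 0 with rfl | hs₀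
  · have hinner : (fun s : ℂ => riemannZeta (s + 1) - (1 / s) * (Complex.Gammaℝ (s + 1))⁻¹)
        = (fun w : ℂ => (hurwitzZetaEven 0 w - 1 / (w - 1) / Complex.Gammaℝ w)
            + hurwitzZetaOdd 0 w) ∘ (fun s => s + 1) := by
      funext s
      simp only [Function.comp_apply]
      rw [show riemannZeta (s + 1) = hurwitzZetaEven 0 (s + 1) + hurwitzZetaOdd 0 (s + 1) by
        rw [← hurwitzZeta_zero]; rfl]
      rw [add_sub_cancel_right]
      rw [div_eq_mul_inv]
      ring
    have hplus : DifferentiableAt ℂ (fun s : ℂ => s + 1) 0 :=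
      differentiableAt_id.add_const 1
    have hE : DifferentiableAt ℂ
        (fun w : ℂ => (hurwitzZetaEven 0 w - 1 / (w - 1) / Complex.Gammaℝ w)
          + hurwitzZetaOdd 0 w) ((0 : ℂ) + 1) := by
      rw [zero_add]
      exact (differentiableAt_hurwitzZetaEven_sub_one_div 0).add
        (differentiable_hurwitzZetaOdd 0 1)
    have hin : DifferentiableAt ℂ
        (fun s : ℂ => riemannZeta (s + 1) - (1 / s) * (Complex.Gammaℝ (s + 1))⁻¹) 0 := by
      rw [hinner]
      exact hE.comp 0 hplus
    refine (differentiableAt_id.mul hin).add ?_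
    exact (Complex.differentiable_Gammaℝ_inv.comp (differentiable_id.add_const 1)) 0
  · refine DifferentiableAt.add ?_ ?_
    · refine differentiableAt_id.mul (DifferentiableAt.sub ?_ ?_)
      · exact (differentiableAt_riemannZeta (by
          intro h
          apply hs₀
          have := congrArg (fun z => z - 1) h
          simpa using this)).comp s₀ (differentiableAt_id.add_const 1)
      · exact ((differentiableAt_const 1).div differentiableAt_id hs₀).mul
          ((Complex.differentiable_Gammaℝ_inv.comp (differentiable_id.add_const 1)) s₀)
    · exact (Complex.differentiable_Gammaℝ_inv.comp (differentiable_id.add_const 1)) s₀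

lemma eta_hurwitzZetaOdd_zero {a : ℝ} (ha : a ∈ Set.Ioo (0:ℝ) 1) :
    hurwitzZetaOdd (a : UnitAddCircle) 0 = (1 - 2 * (a:ℂ)) / 2 := by
  set U : Set ℂ := {s : ℂ | -1 < s.re} with hU
  have hUo : IsOpen U := isOpen_lt continuous_const Complex.continuous_re
  have hUc : Convex ℝ U := convex_halfSpace_re_gt (-1)
  set f₁ : ℂ → ℂ := fun s => 2 * hurwitzZetaOdd (a : UnitAddCircle) s with hf₁
  set f₂ : ℂ → ℂ := fun s => etaH a s - ((2 * a - 1 : ℝ) : ℂ) * etaZ s with hf₂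
  have hstep : ∀ s : ℂ, 1 < s.re → f₁ s = f₂ s := by
    intro s hs
    have hs0 : s ≠ 0 := by
      intro h
      rw [h] at hs
      simp at hs
      linarith
    have h2odd : HasSum (fun n : ℕ => (1 / ((n:ℂ) + a) ^ s - 1 / ((n:ℂ) + 1 - a) ^ s))
        (2 * hurwitzZetaOdd (a : UnitAddCircle) s) := by
      have h := (hasSum_nat_hurwitzZetaOdd_of_mem_Icc (mem_Icc_of_Ioo ha) hs).mul_left 2
      refine h.congr_fun fun n => ?_
      ring
    have hsz : (1:ℝ) < (s+1).re := by
      simp only [Complex.add_re, Complex.one_re]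
      linarith
    have hsummz : Summable (fun n : ℕ => 1 / ((n:ℂ) + 1) ^ (s+1)) := by
      have h1 := Complex.summable_one_div_nat_cpow.mpr hsz
      have h2 := (summable_nat_add_iff 1).mpr h1
      refine h2.congr fun n => ?_
      push_cast
      ring_nf
    have hzeta : HasSum (fun n : ℕ => 1 / ((n:ℂ) + 1) ^ (s+1)) (riemannZeta (s+1)) := by
      rw [zeta_eq_tsum_one_div_nat_add_one_cpow hsz]
      exact hsummz.hasSum
    have hmul := hzeta.mul_left (s * ((2 * a - 1 : ℝ) : ℂ))
    have hg : HasSum (fun n : ℕ => etaG a n s)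
        (2 * hurwitzZetaOdd (a : UnitAddCircle) s
          + s * ((2 * a - 1 : ℝ) : ℂ) * riemannZeta (s+1)) := by
      refine (h2odd.add hmul).congr_fun fun n => ?_
      simp only [etaG]
      push_cast
      rw [show (-s - 1 : ℂ) = -(s+1) by ring, cpow_neg, cpow_neg, cpow_neg]
      field_simp
    have hH : etaH a s = 2 * hurwitzZetaOdd (a : UnitAddCircle) s
        + s * ((2 * a - 1 : ℝ) : ℂ) * riemannZeta (s+1) := hg.tsum_eq
    simp only [hf₁, hf₂, hH, etaZ_eq hs0]
    push_cast
    ring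
  have h₁ : AnalyticOnNhd ℂ f₁ U :=
    (((differentiable_hurwitzZetaOdd (a : UnitAddCircle)).const_mul
      (2:ℂ)).differentiableOn).analyticOnNhd hUo
  have hZdiff : DifferentiableOn ℂ etaZ U :=
    fun s _ => (etaZ_differentiableAt s).differentiableWithinAt
  have h₂ : AnalyticOnNhd ℂ f₂ U :=
    ((etaH_differentiableOn ha).sub (hZdiff.const_mul _)).analyticOnNhd hUo
  have h2U : (2:ℂ) ∈ U := by
    simp only [hU, mem_setOf_eq]
    norm_num
  have hev : f₁ =ᶠ[nhds 2] f₂ := by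
    have hopen : IsOpen {s : ℂ | 1 < s.re} := isOpen_lt continuous_const Complex.continuous_re
    have h2m : (2:ℂ) ∈ {s : ℂ | 1 < s.re} := by
      simp only [mem_setOf_eq]
      norm_num
    filter_upwards [hopen.mem_nhds h2m] with s hs using hstep s hs
  have heq := h₁.eqOn_of_preconnected_of_eventuallyEq h₂ hUc.isPreconnected h2U hev
  have h0 : (0:ℂ) ∈ U := by
    simp only [hU, mem_setOf_eq, Complex.zero_re]
    norm_num
  have hval := heq h0
  simp only [hf₁, hf₂, etaH_zero, etaZ_zero, zero_sub, mul_one] at hval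
  push_cast at hval ⊢
  linear_combination hval / 2



/-- Proposition C.1 (eta_result): the eta function of `−i d/dt − c` on
`2π`-periodic functions, `η_s = Σ_{n∈ℤ} sign(n−c)|n−c|^{−s}`, extends
analytically to `Re s > −1` with value `−1 + 2⟨c⟩` at `s = 0` when `c ∉ ℤ`
(`⟨c⟩ ∈ (0,1)` being the fractional representative of `c`); for an integer
parameter the analogous sum over `n ≠ c` vanishes identically, so its value at
`0` is `0`. -/
theorem eta_invariant_boundary_operator
    (c cf : ℝ) (hcf : cf ∈ Set.Ioo (0:ℝ) 1) (hdiff : ∃ k : ℤ, c - cf = (k : ℝ)) :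
    (∃ F : ℂ → ℂ,
      DifferentiableOn ℂ F {s : ℂ | -1 < s.re} ∧
      (∀ s : ℂ, 1 < s.re →
        HasSum (fun n : ℤ =>
          ((Real.sign ((n : ℝ) - c) : ℝ) : ℂ) *
            Complex.exp (-s * ((Real.log |(n : ℝ) - c| : ℝ) : ℂ))) (F s)) ∧
      F 0 = -1 + 2 * (cf : ℂ)) ∧
    ∀ m : ℤ, ∀ s : ℂ, 1 < s.re →
      HasSum (fun n : {k : ℤ // k ≠ m} =>
        ((Real.sign (((n : ℤ) : ℝ) - (m : ℝ)) : ℝ) : ℂ) *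
          Complex.exp (-s * ((Real.log |((n : ℤ) : ℝ) - (m : ℝ)| : ℝ) : ℂ))) 0 := by
  obtain ⟨k, hk⟩ := hdiff
  constructor
  · -- non-integer case
    have hne : ∀ n : ℤ, (n : ℝ) - c ≠ 0 := by
      intro n h
      have hcfk : cf = ((n - k : ℤ) : ℝ) := by push_cast; linarith
      have h1 : (0:ℝ) < ((n - k : ℤ) : ℝ) := hcfk ▸ hcf.1
      have h2 : ((n - k : ℤ) : ℝ) < 1 := hcfk ▸ hcf.2
      have h1' : (0:ℤ) < n - k := by exact_mod_cast h1
      have h2' : (n - k : ℤ) < 1 := by exact_mod_cast h2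
      omega
    refine ⟨fun s => 2 * hurwitzZetaOdd ((-c : ℝ) : UnitAddCircle) s, ?_, ?_, ?_⟩
    · exact ((differentiable_hurwitzZetaOdd _).const_mul (2:ℂ)).differentiableOn
    · intro s hs
      have h := (hasSum_int_hurwitzZetaOdd (-c) hs).mul_left 2
      refine h.congr_fun fun n => ?_
      have hx : (n : ℝ) + (-c) = (n : ℝ) - c := by ring
      rw [hx]
      set x : ℝ := (n : ℝ) - c with hxdef
      have hx0 : x ≠ 0 := hne n
      have habs : (0:ℝ) < |x| := abs_pos.mpr hx0
      have habs0 : ((|x| : ℝ) : ℂ) ≠ 0 := by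
        simp only [ne_eq, ofReal_eq_zero]
        exact ne_of_gt habs
      have hcp : ((|x| : ℝ) : ℂ) ^ s = Complex.exp (((Real.log |x| : ℝ) : ℂ) * s) := by
        rw [cpow_def_of_ne_zero habs0, ofReal_log (abs_nonneg x)]
      have hsign : ((SignType.sign x : SignType) : ℂ) = ((Real.sign x : ℝ) : ℂ) := by
        rcases lt_or_gt_of_ne hx0 with h1 | h1
        · rw [sign_neg h1, Real.sign_of_neg h1]
          simp
        · rw [sign_pos h1, Real.sign_of_pos h1]
          simp
      rw [hcp, hsign]
      rw [show Complex.exp (-s * ((Real.log |x| : ℝ) : ℂ))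
          = (Complex.exp (((Real.log |x| : ℝ) : ℂ) * s))⁻¹ by
        rw [← Complex.exp_neg]; ring_nf]
      field_simp [Complex.exp_ne_zero]
    · have hcoe : ((-c : ℝ) : UnitAddCircle) = ((1 - cf : ℝ) : UnitAddCircle) := by
        refine (QuotientAddGroup.eq_iff_sub_mem).mpr ?_
        refine AddSubgroup.mem_zmultiples_iff.mpr ⟨-k - 1, ?_⟩
        simp only [zsmul_eq_mul, mul_one]
        push_cast
        linarith
      rw [hcoe]
      show 2 * hurwitzZetaOdd ((1 - cf : ℝ) : UnitAddCircle) 0 = -1 + 2 * (cf : ℂ)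
      rw [eta_hurwitzZetaOdd_zero (show (1 - cf) ∈ Set.Ioo (0:ℝ) 1 from
        ⟨by linarith [hcf.2], by linarith [hcf.1]⟩)]
      push_cast
      ring
  · -- integer case
    intro m s hs
    set F : ℤ → ℂ := fun n =>
      ((Real.sign ((n : ℝ) - (m : ℝ)) : ℝ) : ℂ) *
        Complex.exp (-s * ((Real.log |(n : ℝ) - (m : ℝ)| : ℝ) : ℂ)) with hF
    have hmaj : Summable (fun n : ℤ => |(n : ℝ) - (m : ℝ)| ^ (-s.re)) := by
      refine ((Equiv.addRight m).summable_iff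
        (f := fun n : ℤ => |(n : ℝ) - (m : ℝ)| ^ (-s.re))).mp ?_
      refine (Real.summable_abs_int_rpow hs).congr fun n => ?_
      simp only [Function.comp_apply, Equiv.coe_addRight]
      push_cast
      rw [add_sub_cancel_right]
    have hFs : Summable F := by
      refine Summable.of_norm_bounded hmaj fun n => ?_
      rcases eq_or_ne n m with rfl | hnm
      · simp only [hF, sub_self, Real.sign_zero, ofReal_zero, zero_mul, norm_zero]
        positivity
      · have hx0 : (n : ℝ) - (m : ℝ) ≠ 0 := by
          intro h
          apply hnm
          have : (n:ℝ) = (m:ℝ) := by linarith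
          exact_mod_cast this
        have habs : (0:ℝ) < |(n : ℝ) - (m : ℝ)| := abs_pos.mpr hx0
        simp only [hF, norm_mul]
        have h1 : ‖((Real.sign ((n : ℝ) - (m : ℝ)) : ℝ) : ℂ)‖ = 1 := by
          rcases lt_or_gt_of_ne hx0 with h | h
          · rw [Real.sign_of_neg h]; simp
          · rw [Real.sign_of_pos h]; simp
        have h2 : ‖Complex.exp (-s * ((Real.log |(n : ℝ) - (m : ℝ)| : ℝ) : ℂ))‖
            = |(n : ℝ) - (m : ℝ)| ^ (-s.re) := by
          rw [Complex.norm_exp]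
          rw [Real.rpow_def_of_pos habs]
          congr 1
          simp [Complex.mul_re]
          ring
        rw [h1, h2, one_mul]
    have key : ∀ n : ℤ, F (2 * m - n) = -F n := by
      intro n
      simp only [hF]
      have h1 : ((2 * m - n : ℤ) : ℝ) - (m : ℝ) = -((n : ℝ) - (m : ℝ)) := by push_cast; ring
      rw [h1, Real.sign_neg, abs_neg]
      push_cast
      ring
    set f : {k : ℤ // k ≠ m} → ℂ := fun n => F (n : ℤ) with hf
    have hfs : Summable f := hFs.subtype _
    let e : {k : ℤ // k ≠ m} ≃ {k : ℤ // k ≠ m} :=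
      ⟨fun x => ⟨2 * m - x.1, by have := x.2; omega⟩,
       fun x => ⟨2 * m - x.1, by have := x.2; omega⟩,
       fun x => by ext; simp,
       fun x => by ext; simp⟩
    have ht : ∑' x : {k : ℤ // k ≠ m}, f (e x) = ∑' x, f x := e.tsum_eq f
    have hneg : ∀ x : {k : ℤ // k ≠ m}, f (e x) = -f x := by
      intro x
      simp only [hf]
      exact key x.1
    rw [tsum_congr hneg, tsum_neg] at ht
    have ht0 : ∑' x, f x = 0 := by linear_combination (-1/2 : ℂ) * ht
    exact ht0 ▸ hfs.hasSum
end

section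
/- Let c ∈ (0,1). Then there exists a function G : ℂ → ℂ that is analytic on the half-plane {s ∈ ℂ : Re s > −1} and satisfies G(s) = Σ_{n=1}^∞ ( (n − c)^{−s} − (n + c)^{−s} ) for every s ∈ ℂ with Re s > 1, where (n ± c)^{−s} = exp(−s·log(n ± c)). -/
open Complex HurwitzZeta Set

/-- Proposition C.3 (convergence_of_differences): for `c ∈ (0,1)` the sum
`Σ_{n≥1} ((n−c)^{−s} − (n+c)^{−s})` extends to an analytic function on the
half-plane `Re s > −1`. -/
theorem eta_sum_of_differences_analytic
    (c : ℝ) (hc : c ∈ Set.Ioo (0:ℝ) 1) :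
    ∃ G : ℂ → ℂ,
      DifferentiableOn ℂ G {s : ℂ | -1 < s.re} ∧
      ∀ s : ℂ, 1 < s.re →
        HasSum (fun n : ℕ =>
          Complex.exp (-s * ((Real.log ((n : ℝ) + 1 - c) : ℝ) : ℂ)) -
            Complex.exp (-s * ((Real.log ((n : ℝ) + 1 + c) : ℝ) : ℂ))) (G s) := by
  obtain ⟨hc0, hc1⟩ := hc
  have hcC : (c : ℂ) ≠ 0 := by exact_mod_cast hc0.ne'
  refine ⟨fun s => 2 * hurwitzZetaOdd ((1 - c : ℝ) : UnitAddCircle) s + 1 / (c : ℂ) ^ s, ?_, ?_⟩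
  · apply Differentiable.differentiableOn
    apply ((differentiable_hurwitzZetaOdd _).const_mul 2).add
    simp only [one_div]
    have : Differentiable ℂ fun y : ℂ => ((c : ℂ) ^ y)⁻¹ :=
      (differentiable_id.const_cpow (Or.inl hcC)).inv
        (fun s => by simp [Complex.cpow_eq_zero_iff, hcC])
    simpa [one_div] using this
  · intro s hs
    -- convert the exp terms into cpow terms
    have key : ∀ x : ℝ, 0 < x →
        Complex.exp (-s * ((Real.log x : ℝ) : ℂ)) = 1 / (x : ℂ) ^ s := by
      intro x hx
      have hx0 : (x : ℂ) ≠ 0 := by exact_mod_cast hx.ne'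
      rw [Complex.cpow_def_of_ne_zero hx0, ← Complex.ofReal_log hx.le, one_div,
        ← Complex.exp_neg]
      ring_nf
    have h1c : (1 - c : ℝ) ∈ Icc (0:ℝ) 1 := ⟨by linarith, by linarith⟩
    have hcI : c ∈ Icc (0:ℝ) 1 := ⟨hc0.le, hc1.le⟩
    have hA := hasSum_hurwitzZeta_of_one_lt_re h1c hs
    have hB := hasSum_hurwitzZeta_of_one_lt_re hcI hs
    -- shift hB by one
    have hB' : HasSum (fun n : ℕ => 1 / ((n : ℂ) + 1 + c) ^ s)
        (hurwitzZeta c s - 1 / (c : ℂ) ^ s) := by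
      have h2 := (hasSum_nat_add_iff' (f := fun n : ℕ => 1 / ((n : ℂ) + c) ^ s) 1).mpr hB
      simp only [Finset.range_one, Finset.sum_singleton, Nat.cast_zero, zero_add] at h2
      refine h2.congr_fun fun n => ?_
      push_cast
      ring_nf
    -- identity relating the two Hurwitz zetas and the odd one
    have hodd := hasSum_nat_hurwitzZetaOdd_of_mem_Icc h1c hs
    have hAB : HasSum (fun n : ℕ => (1 / ((n : ℂ) + ((1 - c : ℝ) : ℂ)) ^ s
        - 1 / ((n : ℂ) + 1 - ((1 - c : ℝ) : ℂ)) ^ s) / 2)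
        ((hurwitzZeta ((1 - c : ℝ) : UnitAddCircle) s - hurwitzZeta c s) / 2) := by
      refine ((hA.sub hB).div_const 2).congr_fun fun n => ?_
      push_cast
      ring_nf
    have hid : hurwitzZetaOdd ((1 - c : ℝ) : UnitAddCircle) s = (hurwitzZeta ((1 - c : ℝ) : UnitAddCircle) s - hurwitzZeta c s) / 2 :=
      hodd.unique hAB
    have hf := hA.sub hB'
    have hval : hurwitzZeta ((1 - c : ℝ) : UnitAddCircle) s - (hurwitzZeta c s - 1 / (c : ℂ) ^ s)
        = 2 * hurwitzZetaOdd ((1 - c : ℝ) : UnitAddCircle) s + 1 / (c : ℂ) ^ s := by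
      rw [hid]; ring
    refine HasSum.congr_fun (hval ▸ hf) fun n => ?_
    have hpos1 : (0:ℝ) < (n : ℝ) + 1 - c := by
      have : (0:ℝ) ≤ (n:ℝ) := Nat.cast_nonneg n
      linarith
    have hpos2 : (0:ℝ) < (n : ℝ) + 1 + c := by
      have : (0:ℝ) ≤ (n:ℝ) := Nat.cast_nonneg n
      linarith
    rw [key _ hpos1, key _ hpos2]
    push_cast
    ring_nf
end

section
/- Let c ∈ (0,1), let s ∈ ℝ with −1 < s < 2, and let n be an integer with n > 4. Define ρ(s, c, n) = (n − c)^{−s} − (n + c)^{−s} − ∫_n^{n+1} ( (x − c)^{−s} − (x + c)^{−s} ) dx. Then | ρ(s, c, n) − s(s+1)·c·n^{−s−2} | ≤ 11·|s(s+1)(s+2)|·n^{−s−3}. -/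
open intervalIntegral

noncomputable def etaF (c s : ℝ) : ℝ → ℝ := fun x => (x - c) ^ (-s) - (x + c) ^ (-s)
noncomputable def etaF1 (c s : ℝ) : ℝ → ℝ := fun x => -s * ((x - c) ^ (-s - 1) - (x + c) ^ (-s - 1))
noncomputable def etaF2 (c s : ℝ) : ℝ → ℝ := fun x => s * (s + 1) * ((x - c) ^ (-s - 2) - (x + c) ^ (-s - 2))

lemma eta_hd_pow {c x : ℝ} (hc0 : 0 < c) (hx : c < x) (p : ℝ) :
    HasDerivAt (fun y : ℝ => (y - c) ^ p) (p * (x - c) ^ (p - 1)) x := by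
  have h1 : HasDerivAt (fun y : ℝ => y - c) 1 x := (hasDerivAt_id x).sub_const c
  have h2 := Real.hasDerivAt_rpow_const (x := x - c) (p := p)
    (Or.inl (ne_of_gt (sub_pos.2 hx)))
  exact (h2.comp x h1).congr_deriv (mul_one _)

lemma eta_hd_pow' {c x : ℝ} (hc0 : 0 < c) (hx : c < x) (p : ℝ) :
    HasDerivAt (fun y : ℝ => (y + c) ^ p) (p * (x + c) ^ (p - 1)) x := by
  have h1 : HasDerivAt (fun y : ℝ => y + c) 1 x := (hasDerivAt_id x).add_const c
  have h2 := Real.hasDerivAt_rpow_const (x := x + c) (p := p)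
    (Or.inl (ne_of_gt (by linarith)))
  exact (h2.comp x h1).congr_deriv (mul_one _)

lemma etaF_deriv {c s x : ℝ} (hc0 : 0 < c) (hx : c < x) :
    HasDerivAt (etaF c s) (etaF1 c s x) x := by
  have h1 := eta_hd_pow hc0 hx (-s)
  have h2 := eta_hd_pow' hc0 hx (-s)
  have h := h1.sub h2
  have e : (-s - 1 : ℝ) = -s - 1 := rfl
  refine h.congr_deriv ?_
  unfold etaF1
  ring

lemma etaF1_deriv {c s x : ℝ} (hc0 : 0 < c) (hx : c < x) :
    HasDerivAt (etaF1 c s) (etaF2 c s x) x := by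
  have h1 := eta_hd_pow hc0 hx (-s - 1)
  have h2 := eta_hd_pow' hc0 hx (-s - 1)
  have h := HasDerivAt.const_mul (-s) (h1.sub h2)
  have e : (-s - 1 - 1 : ℝ) = -s - 2 := by ring
  rw [e] at h
  refine h.congr_deriv ?_
  unfold etaF2
  ring

lemma eta_rpow_lip {p A u v : ℝ} (hp : 0 ≤ p) (hA : 0 < A)
    (hu : A ≤ u) (hv : A ≤ v) :
    |v ^ (-p) - u ^ (-p)| ≤ p * A ^ (-p - 1) * |v - u| := by
  have hderiv : ∀ x ∈ Set.Ici A, HasDerivWithinAt (fun y : ℝ => y ^ (-p))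
      (-p * x ^ (-p - 1)) (Set.Ici A) x := by
    intro x hx
    exact (Real.hasDerivAt_rpow_const
      (Or.inl (ne_of_gt (lt_of_lt_of_le hA hx)))).hasDerivWithinAt
  have hbound : ∀ x ∈ Set.Ici A, ‖-p * x ^ (-p - 1)‖ ≤ p * A ^ (-p - 1) := by
    intro x hx
    have hx0 : (0:ℝ) < x := lt_of_lt_of_le hA hx
    rw [norm_mul, Real.norm_eq_abs, Real.norm_eq_abs, abs_neg, abs_of_nonneg hp,
      abs_of_nonneg (Real.rpow_nonneg hx0.le _)]
    exact mul_le_mul_of_nonneg_left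
      (Real.rpow_le_rpow_of_nonpos hA hx (by linarith)) hp
  have := Convex.norm_image_sub_le_of_norm_hasDerivWithin_le hderiv hbound
    (convex_Ici A) (Set.mem_Ici.mpr hu) (Set.mem_Ici.mpr hv)
  simpa [Real.norm_eq_abs] using this

open intervalIntegral

lemma eta_cmp {a s : ℝ} (ha : 5 ≤ a) (hs₁ : -1 < s) (hs₂ : s < 2) :
    3 * (a - 1) ^ (-s - 3) ≤ 11 * a ^ (-s - 3) := by
  have ha1 : (0:ℝ) < a - 1 := by linarith
  have ha0 : (0:ℝ) < a := by linarith
  have hX : (0:ℝ) < (a - 1) ^ (s + 3) := Real.rpow_pos_of_pos ha1 _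
  have hY : (0:ℝ) < a ^ (s + 3) := Real.rpow_pos_of_pos ha0 _
  have h1 : a / (a - 1) ≤ 5 / 4 := by
    rw [div_le_div_iff₀ ha1 (by norm_num)]; linarith
  have h2 : (a / (a - 1)) ^ (s + 3) ≤ ((5:ℝ) / 4) ^ (s + 3) :=
    Real.rpow_le_rpow (by positivity) h1 (by linarith)
  have h3 : ((5:ℝ) / 4) ^ (s + 3) ≤ ((5:ℝ) / 4) ^ ((5:ℕ) : ℝ) :=
    Real.rpow_le_rpow_of_exponent_le (by norm_num) (by push_cast; linarith)
  have h4 : ((5:ℝ) / 4) ^ ((5:ℕ) : ℝ) = 3125 / 1024 := by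
    rw [Real.rpow_natCast]; norm_num
  have h5 : a ^ (s + 3) / (a - 1) ^ (s + 3) ≤ 11 / 3 := by
    rw [← Real.div_rpow ha0.le ha1.le]
    calc (a / (a - 1)) ^ (s + 3) ≤ 3125 / 1024 := by rw [← h4]; exact h2.trans h3
      _ ≤ 11 / 3 := by norm_num
  have h6 : a ^ (s + 3) ≤ (11 / 3) * (a - 1) ^ (s + 3) := by
    rw [div_le_iff₀ hX] at h5; linarith
  have e1 : (-s - 3 : ℝ) = -(s + 3) := by ring
  rw [e1, Real.rpow_neg ha1.le, Real.rpow_neg ha0.le]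
  rw [inv_eq_one_div, inv_eq_one_div, mul_div_assoc' 3, mul_div_assoc' 11,
    div_le_div_iff₀ hX hY]
  nlinarith [hY.le, hX.le]

set_option maxHeartbeats 1000000 in
lemma eta_key {c s a : ℝ} (hc0 : 0 < c) (hc1 : c < 1) (hs₁ : -1 < s) (hs₂ : s < 2)
    (ha : 5 ≤ a) :
    |(etaF c s a - ∫ x in a..(a + 1), etaF c s x) - s * (s + 1) * c * a ^ (-s - 2)|
      ≤ 11 * |s * (s + 1) * (s + 2)| * a ^ (-s - 3) := by
  have ha1 : (0:ℝ) < a - 1 := by linarith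
  have hs1' : (0:ℝ) < s + 1 := by linarith
  have hs2' : (0:ℝ) < s + 2 := by linarith
  have hP : (0:ℝ) ≤ (a - 1) ^ (-s - 3) := Real.rpow_nonneg ha1.le _
  set D : ℝ := |s| * (s + 1) * (s + 2) * (a - 1) ^ (-s - 3) with hD_def
  have hD0 : 0 ≤ D := by positivity
  -- bound on second derivative
  have hb2 : ∀ x ∈ Set.Icc a (a + 1), |etaF2 c s x| ≤ 2 * D := by
    intro x hx
    obtain ⟨hx1, hx2⟩ := hx
    have h := eta_rpow_lip (p := s + 2) (A := a - 1) hs2'.le ha1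
      (by linarith : a - 1 ≤ x - c) (by linarith : a - 1 ≤ x + c)
    have e1 : (-(s + 2) : ℝ) = -s - 2 := by ring
    have e2 : (-(s + 2) - 1 : ℝ) = -s - 3 := by ring
    rw [e2, e1] at h
    have h2c : |x + c - (x - c)| = 2 * c := by
      rw [show x + c - (x - c) = 2 * c by ring]; exact abs_of_nonneg (by linarith)
    rw [h2c] at h
    have hswap : |(x - c) ^ (-s - 2) - (x + c) ^ (-s - 2)|
        ≤ (s + 2) * (a - 1) ^ (-s - 3) * (2 * c) := by rw [abs_sub_comm]; exact h
    calc |etaF2 c s x| = |s * (s + 1)| * |(x - c) ^ (-s - 2) - (x + c) ^ (-s - 2)| := by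
          rw [etaF2, abs_mul]
      _ ≤ |s * (s + 1)| * ((s + 2) * (a - 1) ^ (-s - 3) * (2 * c)) :=
          mul_le_mul_of_nonneg_left hswap (abs_nonneg _)
      _ ≤ 2 * D := by
          rw [abs_mul, abs_of_pos hs1', hD_def]
          nlinarith [abs_nonneg s, mul_nonneg (mul_nonneg (abs_nonneg s) hs1'.le) hs2'.le]
  -- Lipschitz bound on f1
  have hcx : ∀ x ∈ Set.Icc a (a + 1), c < x := fun x hx => by
    have := hx.1; linarith
  have lip1 : ∀ x ∈ Set.Icc a (a + 1), |etaF1 c s x - etaF1 c s a| ≤ 2 * D * |x - a| := by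
    intro x hx
    have := Convex.norm_image_sub_le_of_norm_hasDerivWithin_le
      (f := etaF1 c s) (f' := etaF2 c s) (s := Set.Icc a (a + 1)) (C := 2 * D)
      (fun y hy => (etaF1_deriv hc0 (hcx y hy)).hasDerivWithinAt)
      (fun y hy => by rw [Real.norm_eq_abs]; exact hb2 y hy)
      (convex_Icc _ _) (Set.left_mem_Icc.mpr (by linarith)) hx
    simpa [Real.norm_eq_abs] using this
  -- Taylor bound
  have taylor : ∀ x ∈ Set.Icc a (a + 1),
      |etaF c s x - etaF c s a - etaF1 c s a * (x - a)| ≤ 2 * D := by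
    intro x hx
    have hderiv : ∀ y ∈ Set.Icc a (a + 1), HasDerivWithinAt
        (fun z => etaF c s z - etaF1 c s a * z) (etaF1 c s y - etaF1 c s a)
        (Set.Icc a (a + 1)) y := by
      intro y hy
      have h1 := (etaF_deriv (s := s) hc0 (hcx y hy)).sub
        (HasDerivAt.const_mul (etaF1 c s a) (hasDerivAt_id y))
      exact h1.hasDerivWithinAt.congr_deriv (by ring)
    have hbound : ∀ y ∈ Set.Icc a (a + 1),
        ‖etaF1 c s y - etaF1 c s a‖ ≤ 2 * D := by
      intro y hy
      rw [Real.norm_eq_abs]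
      refine (lip1 y hy).trans ?_
      have : |y - a| ≤ 1 := by
        rw [abs_of_nonneg (by linarith [hy.1])]; linarith [hy.2]
      nlinarith [hD0]
    have := Convex.norm_image_sub_le_of_norm_hasDerivWithin_le hderiv hbound
      (convex_Icc _ _) (Set.left_mem_Icc.mpr (by linarith)) hx
    rw [Real.norm_eq_abs, Real.norm_eq_abs] at this
    have hxa : |x - a| ≤ 1 := by
      rw [abs_of_nonneg (by linarith [hx.1])]; linarith [hx.2]
    calc |etaF c s x - etaF c s a - etaF1 c s a * (x - a)|
        = |(etaF c s x - etaF1 c s a * x) - (etaF c s a - etaF1 c s a * a)| := by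
          ring_nf
      _ ≤ 2 * D * |x - a| := this
      _ ≤ 2 * D := by nlinarith [hD0]
  -- integrability
  have hcont : ContinuousOn (etaF c s) (Set.uIcc a (a + 1)) := by
    rw [Set.uIcc_of_le (by linarith : a ≤ a + 1)]
    exact fun x hx => ((etaF_deriv hc0 (hcx x hx)).continuousAt).continuousWithinAt
  have hint : IntervalIntegrable (etaF c s) MeasureTheory.volume a (a + 1) :=
    hcont.intervalIntegrable
  have hI1 : (∫ x in a..(a + 1), (x - a)) = 1 / 2 := by
    rw [intervalIntegral.integral_sub intervalIntegrable_id intervalIntegrable_const,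
      integral_id, intervalIntegral.integral_const]
    simp; ring
  have hsplit : (∫ x in a..(a + 1), (etaF c s x - etaF c s a - etaF1 c s a * (x - a)))
      = (∫ x in a..(a + 1), etaF c s x) - etaF c s a - etaF1 c s a * (1 / 2) := by
    rw [intervalIntegral.integral_sub
      (hint.sub intervalIntegrable_const)
      (Continuous.intervalIntegrable (by continuity : Continuous fun x : ℝ => etaF1 c s a * (x - a)) _ _),
      intervalIntegral.integral_sub hint intervalIntegrable_const,
      intervalIntegral.integral_const_mul, hI1, intervalIntegral.integral_const]
    simp
  -- bound on the integral of the Taylor remainder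
  have hTb : |∫ x in a..(a + 1), (etaF c s x - etaF c s a - etaF1 c s a * (x - a))| ≤ 2 * D := by
    have h := intervalIntegral.norm_integral_le_of_norm_le_const
      (a := a) (b := a + 1) (C := 2 * D)
      (f := fun x => etaF c s x - etaF c s a - etaF1 c s a * (x - a)) ?_
    · rw [Real.norm_eq_abs] at h
      calc |∫ x in a..(a + 1), (etaF c s x - etaF c s a - etaF1 c s a * (x - a))|
          ≤ 2 * D * |a + 1 - a| := h
        _ = 2 * D := by rw [show a + 1 - a = 1 by ring, abs_one, mul_one]
    · intro x hx
      rw [Set.uIoc_of_le (by linarith : a ≤ a + 1)] at hx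
      rw [Real.norm_eq_abs]
      exact taylor x ⟨hx.1.le, hx.2⟩
  -- bound on the first-order term
  have herr1 : |etaF1 c s a / 2 + s * (s + 1) * c * a ^ (-s - 2)| ≤ D := by
    set S : Set ℝ := Set.Icc (a - 1) (a + 1) with hS_def
    have hφd : ∀ u ∈ S, HasDerivWithinAt
        (fun u => u ^ (-s - 1) + (s + 1) * a ^ (-s - 2) * u)
        (-(s + 1) * (u ^ (-s - 2) - a ^ (-s - 2))) S u := by
      intro u hu
      have hu0 : (0:ℝ) < u := by have := hu.1; linarith
      have h1 := Real.hasDerivAt_rpow_const (x := u) (p := -s - 1) (Or.inl hu0.ne')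
      have h2 := h1.add (HasDerivAt.const_mul ((s + 1) * a ^ (-s - 2)) (hasDerivAt_id u))
      have e : (-s - 1 - 1 : ℝ) = -s - 2 := by ring
      rw [e] at h2
      have h3 : ((-s - 1) * u ^ (-s - 2) + (s + 1) * a ^ (-s - 2) * 1)
          = -(s + 1) * (u ^ (-s - 2) - a ^ (-s - 2)) := by ring
      rw [h3] at h2
      exact h2.hasDerivWithinAt
    have hφb : ∀ u ∈ S, ‖-(s + 1) * (u ^ (-s - 2) - a ^ (-s - 2))‖
        ≤ (s + 1) * ((s + 2) * (a - 1) ^ (-s - 3)) := by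
      intro u hu
      rw [Real.norm_eq_abs, abs_mul, abs_neg, abs_of_pos hs1']
      refine mul_le_mul_of_nonneg_left ?_ hs1'.le
      have h := eta_rpow_lip (p := s + 2) (A := a - 1) hs2'.le ha1
        (by linarith : a - 1 ≤ a) hu.1
      have e1 : (-(s + 2) : ℝ) = -s - 2 := by ring
      have e2 : (-(s + 2) - 1 : ℝ) = -s - 3 := by ring
      rw [e2, e1] at h
      have hua : |u - a| ≤ 1 := abs_le.mpr ⟨by linarith [hu.1], by linarith [hu.2]⟩
      calc |u ^ (-s - 2) - a ^ (-s - 2)| ≤ (s + 2) * (a - 1) ^ (-s - 3) * |u - a| := h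
        _ ≤ (s + 2) * (a - 1) ^ (-s - 3) := by nlinarith [mul_nonneg hs2'.le hP]
    have hmem1 : a - c ∈ S := Set.mem_Icc.mpr ⟨by linarith, by linarith⟩
    have hmem2 : a + c ∈ S := Set.mem_Icc.mpr ⟨by linarith, by linarith⟩
    have hφ := Convex.norm_image_sub_le_of_norm_hasDerivWithin_le hφd hφb
      (convex_Icc _ _) hmem1 hmem2
    rw [Real.norm_eq_abs, Real.norm_eq_abs] at hφ
    have h2c : |a + c - (a - c)| = 2 * c := by
      rw [show a + c - (a - c) = 2 * c by ring]; exact abs_of_nonneg (by linarith)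
    rw [h2c] at hφ
    have hB : |(a + c) ^ (-s - 1) - (a - c) ^ (-s - 1) + (s + 1) * a ^ (-s - 2) * (2 * c)|
        ≤ (s + 1) * ((s + 2) * (a - 1) ^ (-s - 3)) * (2 * c) := by
      have : ((a + c) ^ (-s - 1) + (s + 1) * a ^ (-s - 2) * (a + c))
          - ((a - c) ^ (-s - 1) + (s + 1) * a ^ (-s - 2) * (a - c))
          = (a + c) ^ (-s - 1) - (a - c) ^ (-s - 1) + (s + 1) * a ^ (-s - 2) * (2 * c) := by
        ring
      rw [this] at hφ
      exact hφ
    have hval : etaF1 c s a / 2 + s * (s + 1) * c * a ^ (-s - 2)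
        = (s / 2) * ((a + c) ^ (-s - 1) - (a - c) ^ (-s - 1)
            + (s + 1) * a ^ (-s - 2) * (2 * c)) := by
      rw [etaF1]; ring
    rw [hval, abs_mul]
    have habs2 : |s / 2| = |s| / 2 := by rw [abs_div]; norm_num
    rw [habs2]
    calc |s| / 2 * |(a + c) ^ (-s - 1) - (a - c) ^ (-s - 1) + (s + 1) * a ^ (-s - 2) * (2 * c)|
        ≤ |s| / 2 * ((s + 1) * ((s + 2) * (a - 1) ^ (-s - 3)) * (2 * c)) :=
          mul_le_mul_of_nonneg_left hB (by positivity)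
      _ ≤ D := by
          rw [hD_def]
          nlinarith [abs_nonneg s, mul_nonneg (mul_nonneg (abs_nonneg s) hs1'.le)
            (mul_nonneg hs2'.le hP)]
  -- assemble
  have hkey : (etaF c s a - ∫ x in a..(a + 1), etaF c s x) - s * (s + 1) * c * a ^ (-s - 2)
      = -(∫ x in a..(a + 1), (etaF c s x - etaF c s a - etaF1 c s a * (x - a)))
        - (etaF1 c s a / 2 + s * (s + 1) * c * a ^ (-s - 2)) := by
    rw [hsplit]; ring
  rw [hkey]
  have habs : |s * (s + 1) * (s + 2)| = |s| * (s + 1) * (s + 2) := by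
    rw [abs_mul, abs_mul, abs_of_pos hs1', abs_of_pos hs2']
  have hcmp := eta_cmp ha hs₁ hs₂
  calc |-(∫ x in a..(a + 1), (etaF c s x - etaF c s a - etaF1 c s a * (x - a)))
        - (etaF1 c s a / 2 + s * (s + 1) * c * a ^ (-s - 2))|
      ≤ |∫ x in a..(a + 1), (etaF c s x - etaF c s a - etaF1 c s a * (x - a))|
        + |etaF1 c s a / 2 + s * (s + 1) * c * a ^ (-s - 2)| := by
        rw [sub_eq_add_neg, ← abs_neg (∫ x in a..(a + 1), _)]
        exact (abs_add_le _ _).trans (by rw [abs_neg, abs_neg])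
    _ ≤ 2 * D + D := add_le_add hTb herr1
    _ = 3 * D := by ring
    _ ≤ 11 * |s * (s + 1) * (s + 2)| * a ^ (-s - 3) := by
        rw [habs, hD_def]
        nlinarith [mul_nonneg (mul_nonneg (abs_nonneg s) hs1'.le) hs2'.le, hcmp, hP,
          Real.rpow_nonneg (by linarith : (0:ℝ) ≤ a) (-s - 3)]


/-- Lemma C.2 (asymptotics): for `c ∈ (0,1)`, `s ∈ (−1,2)` and integer `n > 4`,
the quantity
`ρ(s,c,n) = (n−c)^{−s} − (n+c)^{−s} − ∫_n^{n+1} ((x−c)^{−s} − (x+c)^{−s}) dx`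
satisfies `|ρ(s,c,n) − s(s+1)c n^{−s−2}| ≤ 11 |s(s+1)(s+2)| n^{−s−3}`. -/
theorem eta_term_integral_comparison
    (c s : ℝ) (hc : c ∈ Set.Ioo (0:ℝ) 1) (hs₁ : -1 < s) (hs₂ : s < 2)
    (n : ℤ) (hn : 4 < n) :
    |(((n : ℝ) - c) ^ (-s) - ((n : ℝ) + c) ^ (-s)
        - ∫ x in (n : ℝ)..((n : ℝ) + 1), ((x - c) ^ (-s) - (x + c) ^ (-s)))
      - s * (s + 1) * c * (n : ℝ) ^ (-s - 2)|
      ≤ 11 * |s * (s + 1) * (s + 2)| * (n : ℝ) ^ (-s - 3) := by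
  obtain ⟨hc0, hc1⟩ := hc
  have ha : (5:ℝ) ≤ (n:ℝ) := by exact_mod_cast (by linarith : (5:ℤ) ≤ n)
  exact eta_key hc0 hc1 hs₁ hs₂ ha
end

section
/- Let c ∈ (0,1). For every real s with 0 < s < 1 the integral ∫₁^∞ ( (x − c)^{−s} − (x + c)^{−s} ) dx converges, and lim_{s → 0⁺} ∫₁^∞ ( (x − c)^{−s} − (x + c)^{−s} ) dx = 2c. Consequently lim_{s → 0⁺} ( −c^{−s} + ∫₁^∞ ( (x − c)^{−s} − (x + c)^{−s} ) dx ) = −1 + 2c. -/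
open MeasureTheory Filter

section Aux

variable {c s : ℝ}

private lemma eta_hasDerivAt (hc : c ∈ Set.Ioo (0:ℝ) 1) (hs : s ∈ Set.Ioo (0:ℝ) 1)
    {x : ℝ} (hx : x ∈ Set.Ici (1:ℝ)) :
    HasDerivAt (fun x : ℝ => ((x - c) ^ (1 - s) - (x + c) ^ (1 - s)) / (1 - s))
      ((x - c) ^ (-s) - (x + c) ^ (-s)) x := by
  obtain ⟨hc0, hc1⟩ := hc
  obtain ⟨hs0, hs1⟩ := hs
  have hx1 : (1:ℝ) ≤ x := hx
  have hxc : 0 < x - c := by linarith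
  have hxc' : 0 < x + c := by linarith
  have hid1 : HasDerivAt (fun y : ℝ => y - c) 1 x := by
    simpa using (hasDerivAt_id x).sub_const c
  have hid2 : HasDerivAt (fun y : ℝ => y + c) 1 x := by
    simpa using (hasDerivAt_id x).add_const c
  have h1 : HasDerivAt (fun x : ℝ => (x - c) ^ (1 - s))
      (1 * (1 - s) * (x - c) ^ (1 - s - 1)) x :=
    HasDerivAt.rpow_const hid1 (Or.inl hxc.ne')
  have h2 : HasDerivAt (fun x : ℝ => (x + c) ^ (1 - s))
      (1 * (1 - s) * (x + c) ^ (1 - s - 1)) x :=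
    HasDerivAt.rpow_const hid2 (Or.inl hxc'.ne')
  have h := (h1.sub h2).div_const (1 - s)
  have hs' : (1:ℝ) - s ≠ 0 := by linarith
  refine h.congr_deriv ?_
  have : (1:ℝ) - s - 1 = -s := by ring
  rw [this]
  field_simp

private lemma eta_tendsto (hc : c ∈ Set.Ioo (0:ℝ) 1) (hs : s ∈ Set.Ioo (0:ℝ) 1) :
    Tendsto (fun x : ℝ => ((x - c) ^ (1 - s) - (x + c) ^ (1 - s)) / (1 - s))
      atTop (nhds 0) := by
  obtain ⟨hc0, hc1⟩ := hc
  obtain ⟨hs0, hs1⟩ := hs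
  have hsne : (1:ℝ) - s ≠ 0 := by linarith
  -- squeeze using MVT bound
  have hbound : ∀ x : ℝ, 1 ≤ x →
      ‖((x - c) ^ (1 - s) - (x + c) ^ (1 - s)) / (1 - s)‖ ≤ (x - c) ^ (-s) * (2 * c) := by
    intro x hx
    have hxc : 0 < x - c := by linarith
    have hxc' : 0 < x + c := by linarith
    set S : Set ℝ := Set.Icc (x - c) (x + c) with hS
    have hderiv : ∀ t ∈ S, HasDerivWithinAt (fun t : ℝ => t ^ (1 - s))
        ((1 - s) * t ^ (-s)) S t := by
      intro t ht
      have ht0 : 0 < t := lt_of_lt_of_le hxc ht.1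
      have : HasDerivAt (fun t : ℝ => t ^ (1 - s)) ((1 - s) * t ^ (1 - s - 1)) t :=
        Real.hasDerivAt_rpow_const (Or.inl ht0.ne')
      have he : (1:ℝ) - s - 1 = -s := by ring
      rw [he] at this
      exact this.hasDerivWithinAt
    have hC : ∀ t ∈ S, ‖(1 - s) * t ^ (-s)‖ ≤ (1 - s) * (x - c) ^ (-s) := by
      intro t ht
      have ht0 : 0 < t := lt_of_lt_of_le hxc ht.1
      rw [Real.norm_eq_abs, abs_mul, abs_of_nonneg (by linarith : (0:ℝ) ≤ 1 - s),
        abs_of_nonneg (Real.rpow_nonneg ht0.le _)]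
      have : t ^ (-s) ≤ (x - c) ^ (-s) :=
        Real.rpow_le_rpow_of_nonpos hxc ht.1 (by linarith)
      nlinarith
    have hmvt := (convex_Icc (x - c) (x + c)).norm_image_sub_le_of_norm_hasDerivWithin_le hderiv hC
      (Set.left_mem_Icc.2 (by linarith)) (Set.right_mem_Icc.2 (by linarith))
    -- hmvt : ‖(x+c)^(1-s) - (x-c)^(1-s)‖ ≤ (1-s)(x-c)^(-s) * ‖(x+c)-(x-c)‖
    have h2c : ‖(x + c) - (x - c)‖ = 2 * c := by
      rw [Real.norm_eq_abs, abs_of_nonneg (by linarith)]; ring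
    rw [h2c] at hmvt
    rw [norm_div, Real.norm_eq_abs (1 - s), abs_of_nonneg (by linarith : (0:ℝ) ≤ 1 - s)]
    rw [div_le_iff₀ (by linarith : (0:ℝ) < 1 - s)]
    calc ‖(x - c) ^ (1 - s) - (x + c) ^ (1 - s)‖
        = ‖(x + c) ^ (1 - s) - (x - c) ^ (1 - s)‖ := by rw [norm_sub_rev]
      _ ≤ (1 - s) * (x - c) ^ (-s) * (2 * c) := hmvt
      _ = (x - c) ^ (-s) * (2 * c) * (1 - s) := by ring
  have hzero : Tendsto (fun x : ℝ => (x - c) ^ (-s) * (2 * c)) atTop (nhds 0) := by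
    have h1 : Tendsto (fun x : ℝ => x - c) atTop atTop :=
      tendsto_atTop_add_const_right _ (-c) tendsto_id
    have h2 : Tendsto (fun x : ℝ => (x - c) ^ (-s)) atTop (nhds 0) :=
      (tendsto_rpow_neg_atTop hs0).comp h1
    simpa using h2.mul_const (2 * c)
  exact squeeze_zero_norm' (eventually_atTop.2 ⟨1, hbound⟩) hzero

private lemma eta_key_s18 (hc : c ∈ Set.Ioo (0:ℝ) 1) (hs : s ∈ Set.Ioo (0:ℝ) 1) :
    IntegrableOn (fun x : ℝ => (x - c) ^ (-s) - (x + c) ^ (-s)) (Set.Ioi 1) ∧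
    (∫ x in Set.Ioi (1:ℝ), ((x - c) ^ (-s) - (x + c) ^ (-s))) =
      ((1 + c) ^ (1 - s) - (1 - c) ^ (1 - s)) / (1 - s) := by
  obtain ⟨hc0, hc1⟩ := hc
  have hpos : ∀ x ∈ Set.Ioi (1:ℝ), 0 ≤ (x - c) ^ (-s) - (x + c) ^ (-s) := by
    intro x hx
    have hx1 : (1:ℝ) < x := hx
    have hxc : 0 < x - c := by linarith
    have := Real.rpow_le_rpow_of_nonpos hxc (by linarith : x - c ≤ x + c)
      (by have := hs.1; linarith : -s ≤ 0)
    linarith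
  have hderiv := fun x hx => eta_hasDerivAt ⟨hc0, hc1⟩ hs (x := x) hx
  have htend := eta_tendsto ⟨hc0, hc1⟩ hs
  constructor
  · exact integrableOn_Ioi_deriv_of_nonneg' hderiv hpos htend
  · rw [integral_Ioi_of_hasDerivAt_of_nonneg' hderiv hpos htend]
    ring

end Aux

/-- Final evaluation in Appendix C: for `c ∈ (0,1)` and `0 < s < 1` the integral
`∫₁^∞ ((x−c)^{−s} − (x+c)^{−s}) dx` converges, tends to `2c` as `s → 0⁺`, and
consequently `−c^{−s} + ∫₁^∞ ((x−c)^{−s} − (x+c)^{−s}) dx → −1 + 2c`. -/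
theorem eta_invariant_value_limit
    (c : ℝ) (hc : c ∈ Set.Ioo (0:ℝ) 1) :
    (∀ s : ℝ, s ∈ Set.Ioo (0:ℝ) 1 →
      IntegrableOn (fun x : ℝ => (x - c) ^ (-s) - (x + c) ^ (-s)) (Set.Ioi 1)) ∧
    Tendsto (fun s : ℝ => ∫ x in Set.Ioi (1:ℝ), ((x - c) ^ (-s) - (x + c) ^ (-s)))
      (nhdsWithin 0 (Set.Ioi 0)) (nhds (2 * c)) ∧
    Tendsto (fun s : ℝ =>
        -c ^ (-s) + ∫ x in Set.Ioi (1:ℝ), ((x - c) ^ (-s) - (x + c) ^ (-s)))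
      (nhdsWithin 0 (Set.Ioi 0)) (nhds (-1 + 2 * c)) := by
  obtain ⟨hc0, hc1⟩ := hc
  -- the closed form of the integral
  have hF : Tendsto (fun s : ℝ => ((1 + c) ^ (1 - s) - (1 - c) ^ (1 - s)) / (1 - s))
      (nhdsWithin 0 (Set.Ioi 0)) (nhds (2 * c)) := by
    have hcont : ContinuousAt (fun s : ℝ => ((1 + c) ^ (1 - s) - (1 - c) ^ (1 - s)) / (1 - s))
        0 := by
      have h1 : ContinuousAt (fun s : ℝ => (1 + c) ^ (1 - s)) 0 :=
        (Real.continuousAt_const_rpow (by linarith : (1:ℝ) + c ≠ 0)).comp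
          ((continuous_const.sub continuous_id).continuousAt)
      have h2 : ContinuousAt (fun s : ℝ => (1 - c) ^ (1 - s)) 0 :=
        (Real.continuousAt_const_rpow (by linarith : (1:ℝ) - c ≠ 0)).comp
          ((continuous_const.sub continuous_id).continuousAt)
      exact (h1.sub h2).div ((continuous_const.sub continuous_id).continuousAt) (by norm_num)
    have h := hcont.tendsto.mono_left
      (nhdsWithin_le_nhds : nhdsWithin (0:ℝ) (Set.Ioi 0) ≤ nhds 0)
    have hval : ((1 + c) ^ ((1:ℝ) - 0) - (1 - c) ^ ((1:ℝ) - 0)) / (1 - 0) = 2 * c := by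
      norm_num [Real.rpow_one, two_mul]
    rwa [hval] at h
  have hlim : Tendsto (fun s : ℝ => ∫ x in Set.Ioi (1:ℝ), ((x - c) ^ (-s) - (x + c) ^ (-s)))
      (nhdsWithin 0 (Set.Ioi 0)) (nhds (2 * c)) := by
    apply hF.congr'
    filter_upwards [Ioo_mem_nhdsGT_of_mem (by constructor <;> norm_num : (0:ℝ) ∈ Set.Ico 0 1)]
      with s hs
    exact ((eta_key_s18 ⟨hc0, hc1⟩ hs).2).symm
  refine ⟨fun s hs => (eta_key_s18 ⟨hc0, hc1⟩ hs).1, hlim, ?_⟩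
  have hcm : Tendsto (fun s : ℝ => -c ^ (-s)) (nhdsWithin 0 (Set.Ioi 0)) (nhds (-1)) := by
    have : ContinuousAt (fun s : ℝ => c ^ (-s)) 0 :=
      (Real.continuousAt_const_rpow hc0.ne').comp (continuous_neg.continuousAt)
    have h := (this.tendsto.mono_left (nhdsWithin_le_nhds (s := Set.Ioi (0:ℝ)))).neg
    simpa using h
  exact hcm.add hlim
end

section
/- Let n ∈ ℤ, Φ = (2n − 1)·π, and S ∈ ℝ \ {0}. Define u⁺, u⁻ : ℂ \ {0} → ℂ by u⁺(z) = (i/S)·|z|^{−Φ/(2π)}·z^{n−1} and u⁻(z) = |z|^{Φ/(2π)}·conj(z)^{−n}. Then: (i) the function z ↦ |z|^{Φ/(2π)}·u⁺(z) = (i/S)·z^{n−1} is holomorphic on ℂ \ {0} and z ↦ conj( |z|^{−Φ/(2π)}·u⁻(z) ) = z^{−n} is holomorphic on ℂ \ {0} (so (u⁺, u⁻) is a zero mode in the Aharonov–Casher gauge with scalar potential h(z) = −(Φ/2π)·log|z|); and (ii) for every z ≠ 0, u⁻(z) = −i·S·(z/|z|)·u⁺(z). In particular, for any radii 0 < R₁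 < R_out the pair satisfies the Berry–Mondragón boundary condition u⁻ = −i(n₁ + i n₂)·S₁·u⁺ on the circle |z| = R₁ with S₁ = S and inward normal (n₁, n₂) = z/|z|, and on the circle |z| = R_out with parameter S_out = −S and inward normal −z/|z|. -/
/-- The explicit zero mode of Section 5 on the annulus with Berry–Mondragón
boundary conditions: for flux `Φ = (2n−1)π`, the pair
`u⁺(z) = (i/S)|z|^{−Φ/2π} z^{n−1}`, `u⁻(z) = |z|^{Φ/2π} conj(z)^{−n}`
is a zero mode in the Aharonov–Casher gauge with `h(z) = −(Φ/2π) log|z|`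
(i.e. `|z|^{Φ/2π} u⁺` is holomorphic and `conj(|z|^{−Φ/2π} u⁻)` is holomorphic
on `ℂ \ {0}`), satisfies `u⁻ = −iS (z/|z|) u⁺`, and hence the Berry–Mondragón
condition on any circles `|z| = R₁ < R_out` with parameters `S` (inner, inward
normal `z/|z|`) and `−S` (outer, inward normal `−z/|z|`). -/
theorem berry_mondragon_annulus_zero_mode
    (n : ℤ) (Φ S : ℝ) (hΦ : Φ = (2 * (n : ℝ) - 1) * Real.pi) (hS : S ≠ 0)
    (up um : ℂ → ℂ)
    (hup : ∀ z : ℂ, up z = (Complex.I / (S : ℂ)) *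
        ((‖z‖ ^ (-(Φ / (2 * Real.pi))) : ℝ) : ℂ) * z ^ (n - 1))
    (hum : ∀ z : ℂ, um z =
        ((‖z‖ ^ (Φ / (2 * Real.pi)) : ℝ) : ℂ) * (starRingEnd ℂ z) ^ (-n)) :
    DifferentiableOn ℂ
      (fun z : ℂ => ((‖z‖ ^ (Φ / (2 * Real.pi)) : ℝ) : ℂ) * up z)
      {z : ℂ | z ≠ 0} ∧
    (∀ z : ℂ, z ≠ 0 →
      ((‖z‖ ^ (Φ / (2 * Real.pi)) : ℝ) : ℂ) * up z
        = (Complex.I / (S : ℂ)) * z ^ (n - 1)) ∧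
    DifferentiableOn ℂ
      (fun z : ℂ => starRingEnd ℂ
        (((‖z‖ ^ (-(Φ / (2 * Real.pi))) : ℝ) : ℂ) * um z))
      {z : ℂ | z ≠ 0} ∧
    (∀ z : ℂ, z ≠ 0 →
      starRingEnd ℂ (((‖z‖ ^ (-(Φ / (2 * Real.pi))) : ℝ) : ℂ) * um z)
        = z ^ (-n)) ∧
    (∀ z : ℂ, z ≠ 0 →
      um z = -Complex.I * (S : ℂ) * (z / ((‖z‖ : ℝ) : ℂ)) * up z) ∧
    (∀ R₁ Rout : ℝ, 0 < R₁ → R₁ < Rout →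
      (∀ z : ℂ, ‖z‖ = R₁ →
        um z = -Complex.I * (z / (R₁ : ℂ)) * (S : ℂ) * up z) ∧
      (∀ z : ℂ, ‖z‖ = Rout →
        um z = -Complex.I * (-(z / (Rout : ℂ))) * ((-S : ℝ) : ℂ) * up z)) := by
  set a : ℝ := Φ / (2 * Real.pi) with ha
  have han : a = (n : ℝ) - 1/2 := by
    rw [ha, hΦ]; field_simp
  have hSc : (S : ℂ) ≠ 0 := Complex.ofReal_ne_zero.mpr hS
  -- cancellation of the rpow factors
  have hcancel : ∀ z : ℂ, z ≠ 0 →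
      ((‖z‖ ^ a : ℝ) : ℂ) * ((‖z‖ ^ (-a) : ℝ) : ℂ) = 1 := by
    intro z hz
    have hr : (0:ℝ) < ‖z‖ := norm_pos_iff.mpr hz
    rw [← Complex.ofReal_mul, ← Real.rpow_add hr]
    simp
  have e1 : ∀ z : ℂ, z ≠ 0 →
      ((‖z‖ ^ a : ℝ) : ℂ) * up z = (Complex.I / (S : ℂ)) * z ^ (n - 1) := by
    intro z hz
    rw [hup]
    have := hcancel z hz
    linear_combination (Complex.I / (S : ℂ)) * z ^ (n - 1) * this
  have e2 : ∀ z : ℂ, z ≠ 0 →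
      starRingEnd ℂ (((‖z‖ ^ (-a) : ℝ) : ℂ) * um z) = z ^ (-n) := by
    intro z hz
    rw [hum]
    have h : ((‖z‖ ^ (-a) : ℝ) : ℂ) * (((‖z‖ ^ a : ℝ) : ℂ)
        * (starRingEnd ℂ z) ^ (-n)) = (starRingEnd ℂ z) ^ (-n) := by
      have := hcancel z hz
      linear_combination (starRingEnd ℂ z) ^ (-n) * this
    rw [h, ← map_zpow₀, Complex.conj_conj]
  have e3 : ∀ z : ℂ, z ≠ 0 →
      um z = -Complex.I * (S : ℂ) * (z / ((‖z‖ : ℝ) : ℂ)) * up z := by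
    intro z hz
    have hr : (0:ℝ) < ‖z‖ := norm_pos_iff.mpr hz
    have hrc : ((‖z‖ : ℝ) : ℂ) ≠ 0 := Complex.ofReal_ne_zero.mpr hr.ne'
    have h1 : starRingEnd ℂ z = ((‖z‖ : ℂ))^2 / z := by
      rw [eq_div_iff hz, mul_comm, Complex.mul_conj, Complex.normSq_eq_norm_sq]
      push_cast; ring
    have hc : (starRingEnd ℂ z) ^ (-n) = ((‖z‖ : ℂ))^(-(2*n)) * z ^ n := by
      rw [h1, div_zpow, ← zpow_natCast ((‖z‖ : ℂ)) 2, ← zpow_mul]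
      rw [zpow_neg z, div_inv_eq_mul]
      norm_num
    have hz1 : z ^ (n - 1) * z = z ^ n := by
      rw [← zpow_add_one₀ hz]; norm_num
    have hcr : ((‖z‖ : ℂ))^(-(2*n))
        = ((‖z‖ ^ ((-(2*(n:ℝ)))) : ℝ) : ℂ) := by
      rw [← Complex.ofReal_zpow]
      congr 1
      rw [← Real.rpow_intCast]
      congr 1
      push_cast; ring
    have hkey : (‖z‖ ^ a : ℝ) * (‖z‖ ^ ((-(2*(n:ℝ)))) : ℝ)
        * ‖z‖ = ‖z‖ ^ (-a) := by
      nth_rewrite 3 [← Real.rpow_one (‖z‖)]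
      rw [← Real.rpow_add hr, ← Real.rpow_add hr]
      congr 1
      rw [han]; ring
    have hkeyC : ((‖z‖ ^ a : ℝ) : ℂ) * ((‖z‖ ^ ((-(2*(n:ℝ)))) : ℝ) : ℂ)
        * ((‖z‖ : ℝ) : ℂ) = ((‖z‖ ^ (-a) : ℝ) : ℂ) := by
      exact_mod_cast congrArg (Complex.ofReal) hkey
    rw [hum, hup, hc, hcr]
    rw [show -Complex.I * (S : ℂ) * (z / ((‖z‖ : ℝ) : ℂ)) *
        (Complex.I / (S : ℂ) * ((‖z‖ ^ (-a) : ℝ) : ℂ) * z ^ (n - 1))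
        = -(Complex.I * Complex.I) * ((S : ℂ) / (S : ℂ)) *
          (((‖z‖ ^ (-a) : ℝ) : ℂ) * (z ^ (n - 1) * z) / ((‖z‖ : ℝ) : ℂ))
        from by ring]
    rw [Complex.I_mul_I, div_self hSc, hz1, ← hkeyC]
    field_simp
  have d1 : DifferentiableOn ℂ
      (fun z : ℂ => ((‖z‖ ^ a : ℝ) : ℂ) * up z) {z : ℂ | z ≠ 0} := by
    have hd : DifferentiableOn ℂ
        (fun z : ℂ => (Complex.I / (S : ℂ)) * z ^ (n - 1)) {z : ℂ | z ≠ 0} := by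
      intro z hz
      exact ((differentiableAt_zpow.mpr (Or.inl hz)).const_mul _).differentiableWithinAt
    exact hd.congr fun z hz => e1 z hz
  have d2 : DifferentiableOn ℂ
      (fun z : ℂ => starRingEnd ℂ (((‖z‖ ^ (-a) : ℝ) : ℂ) * um z))
      {z : ℂ | z ≠ 0} := by
    have hd : DifferentiableOn ℂ
        (fun z : ℂ => z ^ (-n)) {z : ℂ | z ≠ 0} := by
      intro z hz
      exact (differentiableAt_zpow.mpr (Or.inl hz)).differentiableWithinAt
    exact hd.congr fun z hz => e2 z hz
  refine ⟨d1, e1, d2, e2, e3, ?_⟩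
  intro R₁ Rout hR₁ hlt
  constructor
  · intro z hzR
    have hz : z ≠ 0 := by
      intro h
      rw [h] at hzR; simp at hzR
      exact hR₁.ne hzR
    have := e3 z hz
    rw [hzR] at this
    rw [this]; ring
  · intro z hzR
    have hz : z ≠ 0 := by
      intro h
      rw [h] at hzR; simp at hzR
      exact (hR₁.trans hlt).ne hzR
    have := e3 z hz
    rw [hzR] at this
    rw [this]; push_cast; ring
end
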